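/- arXiv:2009.10851 — 10 statements merged into one kernel-verified Lean document; each statement's English description precedes it below -/
import Mathlib

section
/- Let F be the finite field with Q elements, Q ≥ 3, let a ∈ F be nonzero, let r, s ≥ 1 be integers, and let f(x) = x^r(x^s + a) ∈ F[x]. Then f permutes F if and only if, for every N ∈ {1, …, Q−1}, the sum Σ_{A ∈ S_N} binom(N, A)·a^{N−A}, computed in F, equals 0 when 1 ≤ N ≤ Q−2 and equals 1 when N = Q−1, where S_N = { A ∈ ℤ : 0 ≤ A ≤ N and A = (j(Q−1) − rN)/s for some j ∈ ℤ }. -/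
open Finset

/-- Sum of `x ^ n` over a finite field, for `n ≠ 0`. -/
private lemma aux_sum_pow {F : Type*} [Field F] [Fintype F] (n : ℕ) (hn : n ≠ 0) :
    ∑ x : F, x ^ n = if (Fintype.card F - 1) ∣ n then -1 else 0 := by
  classical
  let φ : Fˣ ↪ F := ⟨fun x => x, Units.val_injective⟩
  have hφ : univ.map φ = univ \ {0} := by
    ext x
    simpa only [mem_map, mem_univ, Function.Embedding.coeFn_mk, true_and, mem_sdiff,
      mem_singleton, φ] using (show (∃ u : Fˣ, (u : F) = x) ↔ x ≠ 0 from isUnit_iff_ne_zero)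
  calc
    ∑ x : F, x ^ n = ∑ x ∈ univ \ {(0 : F)}, x ^ n := by
      rw [← Finset.sum_sdiff ({0} : Finset F).subset_univ, Finset.sum_singleton,
        zero_pow hn, add_zero]
    _ = ∑ x : Fˣ, (x : F) ^ n := by simp [φ, ← hφ, univ.sum_map φ]
    _ = _ := FiniteField.sum_pow_units F n

/-- Power-sum criterion for bijectivity of a self-map of a finite field. -/
private lemma aux_bij_iff {F : Type*} [Field F] [Fintype F] (g : F → F) :
    Function.Bijective g ↔
      ∀ N ∈ Finset.Icc 1 (Fintype.card F - 1), ∑ x : F, g x ^ N = ∑ x : F, x ^ N := by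
  classical
  constructor
  · intro hg N _
    exact Fintype.sum_bijective g hg _ _ (fun x => rfl)
  · intro h
    have h0 : ∀ N ≤ Fintype.card F - 1, ∑ x : F, g x ^ N = ∑ x : F, x ^ N := by
      intro N hN
      rcases Nat.eq_zero_or_pos N with h1 | h1
      · simp [h1]
      · exact h N (Finset.mem_Icc.mpr ⟨h1, hN⟩)
    have hsurj : Function.Surjective g := by
      intro c
      by_contra hc
      push_neg at hc
      set q := Fintype.card F with hq
      have key : ∑ x : F, (g x - c) ^ (q - 1) = ∑ x : F, (x - c) ^ (q - 1) := by
        have expand : ∀ y : F, (y - c) ^ (q - 1)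
            = ∑ k ∈ range (q - 1 + 1), y ^ k * ((-c) ^ (q - 1 - k) * ((q-1).choose k : F)) := by
          intro y
          rw [sub_eq_add_neg, add_pow]
          exact Finset.sum_congr rfl fun k _ => by ring
        simp_rw [expand]
        rw [Finset.sum_comm, Finset.sum_comm (s := univ)]
        refine Finset.sum_congr rfl fun k hk => ?_
        rw [← Finset.sum_mul, ← Finset.sum_mul, h0 k (Nat.lt_succ_iff.mp (mem_range.mp hk))]
      have lhs0 : ∑ x : F, (g x - c) ^ (q - 1) = 0 := by
        have h1 : ∀ x : F, (g x - c) ^ (q - 1) = 1 := fun x =>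
          FiniteField.pow_card_sub_one_eq_one _ (sub_ne_zero.mpr (hc x))
        simp only [h1, Finset.sum_const, card_univ, nsmul_one, ← hq]
        exact FiniteField.cast_card_eq_zero F
      have rhs1 : ∑ x : F, (x - c) ^ (q - 1) = -1 := by
        have : ∑ x : F, (x - c) ^ (q - 1) = ∑ y : F, y ^ (q - 1) :=
          Fintype.sum_bijective (Equiv.subRight c) (Equiv.subRight c).bijective _ _
            (fun x => rfl)
        rw [this, aux_sum_pow]
        · simp [hq]
        · have : 2 ≤ q := Fintype.one_lt_card
          omega
      rw [key, rhs1] at lhs0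
      exact one_ne_zero (neg_eq_zero.mp lhs0)
    exact Finite.surjective_iff_bijective.mp hsurj

open Classical in
/-- Permutation criterion for binomials `x^r (x^s + a)` over a finite field `F` with
`Q` elements (`Q ≥ 3`). -/
theorem stmt_0 {F : Type*} [Field F] [Fintype F] (Q : ℕ)
    (hQcard : Fintype.card F = Q) (hQ : 3 ≤ Q)
    (a : F) (ha : a ≠ 0) (r s : ℕ) (hr : 1 ≤ r) (hs : 1 ≤ s) :
    Function.Bijective (fun x : F => x ^ r * (x ^ s + a)) ↔
      ∀ N ∈ Finset.Icc 1 (Q - 1),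
        ∑ A ∈ (Finset.range (N + 1)).filter
            (fun A : ℕ => ∃ j : ℤ, (A : ℤ) * s = j * ((Q : ℤ) - 1) - (r : ℤ) * N),
          (N.choose A : F) * a ^ (N - A) = (if N = Q - 1 then 1 else 0) := by
  subst hQcard
  set q := Fintype.card F with hq
  rw [aux_bij_iff]
  refine forall₂_congr fun N hN => ?_
  obtain ⟨hN1, hN2⟩ := Finset.mem_Icc.mp hN
  -- rewrite the RHS power sum
  have hrhs : ∑ x : F, x ^ N = if N = q - 1 then -1 else 0 := by
    rw [aux_sum_pow N (by omega)]
    congr 1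
    simp only [eq_iff_iff]
    constructor
    · intro hdvd
      have := Nat.le_of_dvd (by omega) hdvd
      omega
    · rintro rfl; exact dvd_rfl
  -- rewrite the LHS power sum
  have expand : ∀ x : F, (x ^ r * (x ^ s + a)) ^ N
      = ∑ A ∈ range (N + 1), x ^ (r * N + s * A) * ((N.choose A : F) * a ^ (N - A)) := by
    intro x
    rw [mul_pow, ← pow_mul, add_pow, Finset.mul_sum]
    refine Finset.sum_congr rfl fun A hA => ?_
    rw [← pow_mul, pow_add]
    ring
  have hfilt : ((Finset.range (N + 1)).filter
        (fun A : ℕ => ∃ j : ℤ, (A : ℤ) * s = j * ((q : ℤ) - 1) - (r : ℤ) * N))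
      = (Finset.range (N + 1)).filter (fun A : ℕ => (q - 1) ∣ (r * N + s * A)) := by
    refine Finset.filter_congr fun A _ => ?_
    have hcast : ((q - 1 : ℕ) : ℤ) = (q : ℤ) - 1 := by
      have : 1 ≤ q := by omega
      push_cast [this]; ring
    constructor
    · rintro ⟨j, hj⟩
      rw [← Int.natCast_dvd_natCast]
      refine ⟨j, ?_⟩
      rw [hcast]
      push_cast
      linear_combination hj
    · rintro ⟨k, hk⟩
      refine ⟨k, ?_⟩
      zify [show 1 ≤ q by omega] at hk
      linear_combination hk
  have hlhs : ∑ x : F, (x ^ r * (x ^ s + a)) ^ N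
      = -∑ A ∈ ((Finset.range (N + 1)).filter
            (fun A : ℕ => ∃ j : ℤ, (A : ℤ) * s = j * ((q : ℤ) - 1) - (r : ℤ) * N)),
          (N.choose A : F) * a ^ (N - A) := by
    simp_rw [expand]
    rw [Finset.sum_comm]
    have step : ∀ A ∈ range (N + 1),
        ∑ x : F, x ^ (r * N + s * A) * ((N.choose A : F) * a ^ (N - A))
          = (if (q - 1) ∣ (r * N + s * A) then (-1 : F) else 0)
              * ((N.choose A : F) * a ^ (N - A)) := by
      intro A _
      rw [← Finset.sum_mul, aux_sum_pow _ (by positivity)]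
    rw [Finset.sum_congr rfl step, hfilt, Finset.sum_filter, ← Finset.sum_neg_distrib]
    exact Finset.sum_congr rfl fun A _ => by split_ifs <;> ring
  rw [hlhs, hrhs]
  constructor
  · intro h
    have := neg_eq_iff_eq_neg.mp h
    rw [this]
    split_ifs <;> simp
  · intro h
    rw [h]
    split_ifs <;> simp
end

section
/- Let q be a prime power, e ≥ 2, a ∈ F_{q^e} nonzero, and ℓ = q^{e−1} + ⋯ + q + 1. Let r and s be positive integers with r ≡ s (mod ℓ). Suppose that x^s(x^{q−1} + a) does not permute F_{q^e}, and that Σ_{A ∈ S_{N,s}} binom(N, A)·a^{N−A} ≠ 0 in F_{q^e} for some N ∈ {1, …, q^e − 2} with (q−1) | N. Then x^r(x^{q−1} + a) does not permute F_{q^e}. -/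
open Finset

/-- Sum of `x ^ i` over a finite field, for `i ≠ 0`. -/
lemma sum_pow_field_aux {K : Type*} [Field K] [Fintype K] [DecidableEq K] (i : ℕ) (hi : i ≠ 0) :
    ∑ x : K, x ^ i = if (Fintype.card K - 1) ∣ i then -1 else 0 := by
  classical
  let φ : Kˣ ↪ K := ⟨fun x ↦ x, Units.val_injective⟩
  have hmap : univ.map φ = univ \ {0} := by
    ext x
    simp only [mem_map, mem_univ, Function.Embedding.coeFn_mk, true_and, mem_sdiff,
      mem_singleton, φ]
    exact isUnit_iff_ne_zero
  calc
    ∑ x : K, x ^ i = ∑ x ∈ univ \ {(0 : K)}, x ^ i := by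
      rw [← sum_sdiff ({0} : Finset K).subset_univ, sum_singleton, zero_pow hi, add_zero]
    _ = ∑ x : Kˣ, (x ^ i : K) := by simp [φ, ← hmap, univ.sum_map φ]
    _ = _ := FiniteField.sum_pow_units K i

open Classical in
/-- If `r ≡ s (mod ℓ)`, `x^s (x^{q-1} + a)` does not permute `F_{q^e}`, and the
binomial-coefficient sum over `S_{N,s}` is nonzero for some `N ∈ {1, …, q^e - 2}`
with `(q-1) ∣ N`, then `x^r (x^{q-1} + a)` does not permute `F_{q^e}`. -/
theorem stmt_2 (p m q e : ℕ) (hp : p.Prime) (hm : 0 < m) (hq : q = p ^ m)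
    (he : 2 ≤ e) {F : Type*} [Field F] [Fintype F] (hF : Fintype.card F = q ^ e)
    (a : F) (ha : a ≠ 0)
    (ℓ : ℕ) (hℓ : ℓ = ∑ i ∈ Finset.range e, q ^ i)
    (r s : ℕ) (hr : 1 ≤ r) (hs : 1 ≤ s) (hrs : r ≡ s [MOD ℓ])
    (hnotperm : ¬ Function.Bijective (fun x : F => x ^ s * (x ^ (q - 1) + a)))
    (hsum : ∃ N ∈ Finset.Icc 1 (q ^ e - 2), (q - 1) ∣ N ∧
      ∑ A ∈ (Finset.range (N + 1)).filter
          (fun A : ℕ => ∃ j : ℤ, (A : ℤ) = j * ℓ - ((s * N / (q - 1) : ℕ) : ℤ)),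
        (N.choose A : F) * a ^ (N - A) ≠ 0) :
    ¬ Function.Bijective (fun x : F => x ^ r * (x ^ (q - 1) + a)) := by
  obtain ⟨N, hNmem, hdvdN, hsum⟩ := hsum
  rw [Finset.mem_Icc] at hNmem
  obtain ⟨hN1, hN2⟩ := hNmem
  intro hbij
  apply hsum
  -- basic numerics
  have hq2 : 2 ≤ q := by
    rw [hq]
    exact Nat.one_lt_pow (by omega) hp.one_lt
  have hq1 : 1 ≤ q - 1 := by omega
  have hqe2 : 2 ≤ q ^ e := le_trans hq2 (Nat.le_self_pow (by omega) q)
  -- ℓ * (q - 1) = q ^ e - 1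
  have hℓq : ℓ * (q - 1) = q ^ e - 1 := by
    have h1 : ((∑ i ∈ Finset.range e, (q : ℤ) ^ i)) * ((q : ℤ) - 1) = (q : ℤ) ^ e - 1 :=
      geom_sum_mul _ _
    have : ((ℓ * (q - 1) : ℕ) : ℤ) = ((q ^ e - 1 : ℕ) : ℤ) := by
      push_cast [hℓ, Nat.cast_sub (by omega : 1 ≤ q), Nat.cast_sub (by omega : 1 ≤ q ^ e)]
      simpa using h1
    exact_mod_cast this
  have hℓpos : 0 < ℓ := by
    rcases Nat.eq_zero_or_pos ℓ with h | h
    · subst h; simp at hℓq; omega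
    · exact h
  have hcard1 : Fintype.card F - 1 = q ^ e - 1 := by rw [hF]
  -- exact division
  have hMdvd : (q - 1) ∣ s * N := hdvdN.mul_left s
  set M := s * N / (q - 1) with hMdef
  have hMeq : (q - 1) * M = s * N := Nat.mul_div_cancel' hMdvd
  -- pointwise equality of N-th powers
  have hpoint : ∀ x : F, (x ^ r * (x ^ (q - 1) + a)) ^ N = (x ^ s * (x ^ (q - 1) + a)) ^ N := by
    intro x
    rcases eq_or_ne x 0 with rfl | hx
    · rw [zero_pow (by omega : r ≠ 0), zero_pow (by omega : s ≠ 0)]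
    · have hmod : r * N ≡ s * N [MOD q ^ e - 1] := by
        have h1 : r * N ≡ s * N [MOD ℓ * N] := Nat.ModEq.mul_right' N hrs
        have h2 : (q ^ e - 1) ∣ ℓ * N := by
          rw [← hℓq]; exact mul_dvd_mul_left ℓ hdvdN
        exact h1.of_dvd h2
      have hxpow : x ^ (r * N) = x ^ (s * N) := by
        have hu : (Units.mk0 x hx : Fˣ) ^ (r * N) = (Units.mk0 x hx) ^ (s * N) := by
          rw [pow_eq_pow_iff_modEq]
          refine hmod.of_dvd ?_
          have : orderOf (Units.mk0 x hx) ∣ Fintype.card Fˣ := orderOf_dvd_card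
          rwa [Fintype.card_units, hcard1] at this
        have := congrArg (Units.val) hu
        simpa using this
      rw [mul_pow, mul_pow, ← pow_mul, ← pow_mul, hxpow]
  -- the full sum of f_r(x)^N vanishes
  have hT0 : ∑ x : F, (x ^ r * (x ^ (q - 1) + a)) ^ N = 0 := by
    have h1 : ∑ x : F, (x ^ r * (x ^ (q - 1) + a)) ^ N = ∑ y : F, y ^ N :=
      Fintype.sum_bijective _ hbij _ _ (fun x => rfl)
    rw [h1]
    exact FiniteField.sum_pow_lt_card_sub_one F N (by rw [hF]; omega)
  -- expand the sum for s
  classical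
  have hkey : ∑ x : F, (x ^ s * (x ^ (q - 1) + a)) ^ N =
      - ∑ A ∈ (Finset.range (N + 1)).filter
          (fun A : ℕ => ∃ j : ℤ, (A : ℤ) = j * ℓ - ((s * N / (q - 1) : ℕ) : ℤ)),
        (N.choose A : F) * a ^ (N - A) := by
    have expand : ∀ x : F, (x ^ s * (x ^ (q - 1) + a)) ^ N =
        ∑ A ∈ Finset.range (N + 1),
          (N.choose A : F) * a ^ (N - A) * x ^ (s * N + (q - 1) * A) := by
      intro x
      rw [mul_pow, ← pow_mul, add_pow, Finset.mul_sum]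
      refine Finset.sum_congr rfl fun A hA => ?_
      rw [← pow_mul, pow_add]
      ring
    calc ∑ x : F, (x ^ s * (x ^ (q - 1) + a)) ^ N
        = ∑ x : F, ∑ A ∈ Finset.range (N + 1),
            (N.choose A : F) * a ^ (N - A) * x ^ (s * N + (q - 1) * A) := by
          exact Finset.sum_congr rfl fun x _ => expand x
      _ = ∑ A ∈ Finset.range (N + 1),
            (N.choose A : F) * a ^ (N - A) * ∑ x : F, x ^ (s * N + (q - 1) * A) := by
          rw [Finset.sum_comm]
          exact Finset.sum_congr rfl fun A _ => by rw [Finset.mul_sum]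
      _ = ∑ A ∈ Finset.range (N + 1),
            (N.choose A : F) * a ^ (N - A) *
              (if (∃ j : ℤ, (A : ℤ) = j * ℓ - ((s * N / (q - 1) : ℕ) : ℤ)) then -1 else 0) := by
          refine Finset.sum_congr rfl fun A _ => ?_
          rw [sum_pow_field_aux _ (by have := Nat.mul_pos hs hN1; omega)]
          have hiff : (Fintype.card F - 1 ∣ s * N + (q - 1) * A) ↔
              (∃ j : ℤ, (A : ℤ) = j * ↑ℓ - ((s * N / (q - 1) : ℕ) : ℤ)) := by
            rw [hcard1, ← hℓq]
            constructor
            · rintro ⟨k, hk⟩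
              refine ⟨k, ?_⟩
              have h1 : (q - 1) * (M + A) = ℓ * (q - 1) * k := by
                rw [Nat.mul_add, hMeq]; exact hk
              have h2 : M + A = ℓ * k :=
                Nat.eq_of_mul_eq_mul_left (by omega : 0 < q - 1)
                  (by rw [h1]; ring)
              have h2' : M + A = k * ℓ := by rw [h2, Nat.mul_comm]
              have h3 : (M : ℤ) + A = (k : ℤ) * ℓ := by exact_mod_cast h2'
              omega
            · rintro ⟨j, hj⟩
              have hjnn : (0 : ℤ) ≤ j := by
                by_contra hneg
                push_neg at hneg
                nlinarith [Int.natCast_nonneg A, Int.natCast_nonneg M,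
                  (by exact_mod_cast hℓpos : (0:ℤ) < (ℓ:ℤ))]
              obtain ⟨k, rfl⟩ := Int.eq_ofNat_of_zero_le hjnn
              have hnat : M + A = ℓ * k := by
                have : (M : ℤ) + A = (ℓ : ℤ) * k := by rw [hj]; ring
                exact_mod_cast this
              refine ⟨k, ?_⟩
              calc s * N + (q - 1) * A = (q - 1) * (M + A) := by rw [Nat.mul_add, hMeq]
                _ = ℓ * (q - 1) * k := by rw [hnat]; ring
          simp only [hiff]
      _ = - ∑ A ∈ (Finset.range (N + 1)).filter
            (fun A : ℕ => ∃ j : ℤ, (A : ℤ) = j * ℓ - ((s * N / (q - 1) : ℕ) : ℤ)),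
          (N.choose A : F) * a ^ (N - A) := by
          rw [← Finset.sum_neg_distrib, Finset.sum_filter]
          refine Finset.sum_congr rfl fun A _ => ?_
          split_ifs with h
          · ring
          · ring
  have : (0 : F) = - ∑ A ∈ (Finset.range (N + 1)).filter
          (fun A : ℕ => ∃ j : ℤ, (A : ℤ) = j * ℓ - ((s * N / (q - 1) : ℕ) : ℤ)),
        (N.choose A : F) * a ^ (N - A) := by
    rw [← hkey]
    rw [← hT0]
    exact Finset.sum_congr rfl fun x _ => hpoint x
  have h0 := this.symm
  rwa [neg_eq_zero] at h0
end

section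
/- Let q = p^m where p is prime and m ≥ 1, and let k be an integer with 0 ≤ k ≤ q − 1. Then p divides the binomial coefficient binom(q−2, k) if and only if k ≡ p − 1 (mod p). -/
lemma aux_not_dvd_choose {p n r : ℕ} (hp : p.Prime) (hn : n < p) (hr : r ≤ n) :
    ¬ p ∣ n.choose r := by
  intro h
  have h1 : p ∣ n.factorial := by
    rw [← Nat.choose_mul_factorial_mul_factorial hr]
    exact Dvd.dvd.mul_right (Dvd.dvd.mul_right h _) _
  exact absurd ((Nat.Prime.dvd_factorial hp).mp h1) (not_le.mpr hn)

lemma aux_not_dvd_pow_sub_one {p : ℕ} (hp : p.Prime) :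
    ∀ t j, j ≤ p ^ t - 1 → ¬ p ∣ (p ^ t - 1).choose j := by
  haveI : Fact p.Prime := ⟨hp⟩
  have hp2 := hp.two_le
  intro t
  induction t with
  | zero =>
    intro j hj
    simp only [pow_zero] at hj
    have : j = 0 := by omega
    subst this
    simp [hp.one_lt.ne']
  | succ t ih =>
    intro j hj
    have hpt : 1 ≤ p ^ t := Nat.one_le_pow _ _ hp.pos
    have hpt1 : 1 ≤ p ^ (t + 1) := Nat.one_le_pow _ _ hp.pos
    have key : p ^ (t + 1) - 1 = p * (p ^ t - 1) + (p - 1) := by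
      zify [hpt, hpt1, hp.pos, hp.one_lt.le]
      rw [pow_succ]; ring
    have hmod : (p ^ (t + 1) - 1) % p = p - 1 := by
      rw [key, Nat.mul_add_mod]; exact Nat.mod_eq_of_lt (by omega)
    have hdiv : (p ^ (t + 1) - 1) / p = p ^ t - 1 := by
      rw [key, Nat.mul_add_div hp.pos, Nat.div_eq_of_lt (by omega)]; omega
    have lucas := Choose.choose_modEq_choose_mod_mul_choose_div_nat
      (n := p ^ (t + 1) - 1) (k := j) (p := p)
    rw [hmod, hdiv] at lucas
    intro h
    have h0 : (p - 1).choose (j % p) * (p ^ t - 1).choose (j / p) % p = 0 := by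
      have := (Nat.modEq_zero_iff_dvd.mpr h).symm.trans lucas
      simpa [Nat.ModEq] using this.symm
    have hd : p ∣ (p - 1).choose (j % p) * (p ^ t - 1).choose (j / p) :=
      Nat.dvd_of_mod_eq_zero h0
    rcases (Nat.Prime.dvd_mul hp).mp hd with h1 | h2
    · exact aux_not_dvd_choose hp (by omega)
        (by have := Nat.mod_lt j hp.pos; omega) h1
    · refine ih (j / p) ?_ h2
      have hjlt : j < p ^ t * p := by rw [← pow_succ]; omega
      have hdl := (Nat.div_lt_iff_lt_mul hp.pos).mpr hjlt
      omega

/-- For `q = p^m` (`p` prime, `m ≥ 1`) and `0 ≤ k ≤ q - 1`, `p` divides the binomial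
coefficient `binom(q-2, k)` if and only if `k ≡ p - 1 (mod p)`. -/
theorem stmt_4 (p m k : ℕ) (hp : p.Prime) (hm : 1 ≤ m) (hk : k ≤ p ^ m - 1) :
    p ∣ Nat.choose (p ^ m - 2) k ↔ k ≡ p - 1 [MOD p] := by
  haveI : Fact p.Prime := ⟨hp⟩
  have hp2 := hp.two_le
  obtain ⟨m', rfl⟩ : ∃ m', m = m' + 1 := ⟨m - 1, by omega⟩
  have hpt : 1 ≤ p ^ m' := Nat.one_le_pow _ _ hp.pos
  have hpt2 : 2 ≤ p ^ (m' + 1) := le_trans hp2 (Nat.le_self_pow (by omega) p)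
  have key : p ^ (m' + 1) - 2 = p * (p ^ m' - 1) + (p - 2) := by
    zify [hpt, hpt2, hp2]
    rw [pow_succ]; ring
  have hmod : (p ^ (m' + 1) - 2) % p = p - 2 := by
    rw [key, Nat.mul_add_mod]; exact Nat.mod_eq_of_lt (by omega)
  have hdiv : (p ^ (m' + 1) - 2) / p = p ^ m' - 1 := by
    rw [key, Nat.mul_add_div hp.pos, Nat.div_eq_of_lt (by omega)]; omega
  have lucas := Choose.choose_modEq_choose_mod_mul_choose_div_nat
    (n := p ^ (m' + 1) - 2) (k := k) (p := p)
  rw [hmod, hdiv] at lucas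
  have hiff : p ∣ Nat.choose (p ^ (m' + 1) - 2) k ↔
      p ∣ (p - 2).choose (k % p) * (p ^ m' - 1).choose (k / p) := by
    constructor
    · intro h
      exact Nat.modEq_zero_iff_dvd.mp ((Nat.modEq_zero_iff_dvd.mpr h).symm.trans lucas).symm
    · intro h
      exact Nat.modEq_zero_iff_dvd.mp (lucas.trans (Nat.modEq_zero_iff_dvd.mpr h)).symm.symm
  rw [hiff]
  have hnd : ¬ p ∣ (p ^ m' - 1).choose (k / p) := by
    refine aux_not_dvd_pow_sub_one hp m' (k / p) ?_
    have hklt : k < p ^ m' * p := by rw [← pow_succ]; omega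
    have hdl := (Nat.div_lt_iff_lt_mul hp.pos).mpr hklt
    omega
  have hkmod : k % p < p := Nat.mod_lt _ hp.pos
  constructor
  · intro h
    rcases (Nat.Prime.dvd_mul hp).mp h with h1 | h2
    · by_contra hne
      have : k % p ≠ p - 1 := by
        intro he
        exact hne (by unfold Nat.ModEq; rw [he, Nat.mod_eq_of_lt (by omega)])
      exact aux_not_dvd_choose hp (by omega) (by omega) h1
    · exact absurd h2 hnd
  · intro h
    have : k % p = p - 1 := by
      have := h; unfold Nat.ModEq at this
      rw [Nat.mod_eq_of_lt (by omega : p - 1 < p)] at this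
      exact this
    rw [this, Nat.choose_eq_zero_of_lt (by omega)]
    exact dvd_mul_of_dvd_left (dvd_zero p) _
end

section
/- Let q be a prime power, e ≥ 2, a ∈ F_{q^e} nonzero, and h a positive integer. Then the linearized binomial L(x) = x^{q^h} + a·x permutes F_{q^e} if and only if (−a)^{(q^e−1)/(q^d−1)} ≠ 1, where d = gcd(e, h). -/
/-- `gcd (q^a - 1) (q^b - 1) = q^(gcd a b) - 1`. -/
lemma aux_gcd_pow_sub_one (q : ℕ) (hq : 1 ≤ q) (a b : ℕ) :
    Nat.gcd (q ^ a - 1) (q ^ b - 1) = q ^ Nat.gcd a b - 1 := by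
  induction a, b using Nat.gcd.induction with
  | H0 b => simp
  | H1 a b ha ih =>
    have h1 : q ^ a - 1 ∣ q ^ (a * (b / a)) - 1 := by
      simpa [pow_mul] using Nat.sub_dvd_pow_sub_pow (q ^ a) 1 (b / a)
    have hme : q ^ b ≡ q ^ (b % a) [MOD q ^ a - 1] := by
      have h2 : (1 : ℕ) ≡ q ^ (a * (b / a)) [MOD q ^ a - 1] :=
        (Nat.modEq_iff_dvd' (Nat.one_le_pow _ _ hq)).2 h1
      calc q ^ b = q ^ (b % a) * q ^ (a * (b / a)) := by
            rw [← pow_add]; congr 1; rw [Nat.mod_add_div]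
        _ ≡ q ^ (b % a) * 1 [MOD q ^ a - 1] := (Nat.ModEq.refl _).mul h2.symm
        _ = q ^ (b % a) := by rw [mul_one]
    have hme' : q ^ b - 1 ≡ q ^ (b % a) - 1 [MOD q ^ a - 1] := by
      apply Nat.ModEq.add_right_cancel' 1
      rwa [Nat.sub_add_cancel (Nat.one_le_pow _ _ hq),
        Nat.sub_add_cancel (Nat.one_le_pow _ _ hq)]
    rw [Nat.gcd_comm, Nat.ModEq.gcd_eq hme', ih, ← Nat.gcd_rec]

/-- In a finite cyclic group, `b` is a `k`-th power iff `b ^ (n / gcd k n) = 1`. -/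
lemma aux_pow_surj {G : Type*} [CommGroup G] [Fintype G] [IsCyclic G] (k : ℕ) (b : G) :
    (∃ x : G, x ^ k = b) ↔ b ^ (Fintype.card G / Nat.gcd k (Fintype.card G)) = 1 := by
  obtain ⟨g, hg⟩ := IsCyclic.exists_generator (α := G)
  set n := Fintype.card G with hn
  set d := Nat.gcd k n with hd
  have hdk : d ∣ k := Nat.gcd_dvd_left _ _
  have hdn : d ∣ n := Nat.gcd_dvd_right _ _
  have hn0 : 0 < n := Fintype.card_pos
  have hd0 : 0 < d := Nat.gcd_pos_of_pos_right _ hn0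
  have hog : orderOf g = n :=
    (orderOf_eq_card_of_forall_mem_zpowers hg).trans Nat.card_eq_fintype_card
  constructor
  · rintro ⟨x, rfl⟩
    rw [← pow_mul]
    have heq : k * (n / d) = (k / d) * n := by
      calc k * (n / d) = (k / d) * d * (n / d) := by rw [Nat.div_mul_cancel hdk]
        _ = (k / d) * (d * (n / d)) := by ring
        _ = (k / d) * n := by rw [Nat.mul_div_cancel' hdn]
    rw [heq, pow_mul, pow_card_eq_one]
  · intro hb
    obtain ⟨t, ht⟩ := Subgroup.mem_zpowers_iff.mp (hg b)
    have hgn : g ^ (n : ℤ) = 1 := by rw [zpow_natCast]; exact pow_card_eq_one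
    -- d ∣ t
    have h1 : g ^ (t * ((n / d : ℕ) : ℤ)) = 1 := by
      rw [zpow_mul, ht, zpow_natCast]; exact hb
    have h2 : ((orderOf g : ℕ) : ℤ) ∣ t * ((n / d : ℕ) : ℤ) :=
      orderOf_dvd_iff_zpow_eq_one.2 h1
    rw [hog] at h2
    have hnd : (d : ℤ) * ((n / d : ℕ) : ℤ) = (n : ℤ) := by
      exact_mod_cast Nat.mul_div_cancel' hdn
    have hnd0 : ((n / d : ℕ) : ℤ) ≠ 0 := by
      have : 0 < n / d := Nat.div_pos (Nat.le_of_dvd hn0 hdn) hd0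
      exact_mod_cast this.ne'
    have hds : (d : ℤ) ∣ t := by
      rcases h2 with ⟨c, hc⟩
      refine ⟨c, mul_left_cancel₀ hnd0 ?_⟩
      linear_combination hc - c * hnd
    obtain ⟨s, hs⟩ := hds
    have hbez : (d : ℤ) = k * Nat.gcdA k n + n * Nat.gcdB k n := Nat.gcd_eq_gcd_ab k n
    set u := Nat.gcdA k n
    set v := Nat.gcdB k n
    refine ⟨g ^ (u * s), ?_⟩
    calc (g ^ (u * s)) ^ k = g ^ (u * s * (k : ℤ)) := by
          rw [← zpow_natCast (g ^ (u * s)) k, ← zpow_mul]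
      _ = g ^ ((d : ℤ) * s) * (g ^ (n : ℤ)) ^ (-(v * s)) := by
          rw [← zpow_mul, ← zpow_add]; congr 1; linear_combination (-s) * hbez
      _ = g ^ ((d : ℤ) * s) := by rw [hgn, one_zpow, mul_one]
      _ = b := by rw [← hs, ht]

/-- The linearized binomial `L(x) = x^{q^h} + a x` permutes `F_{q^e}` if and only if
`(-a)^{(q^e - 1)/(q^d - 1)} ≠ 1`, where `d = gcd(e, h)`. -/
theorem stmt_5 (p m q e h : ℕ) (hp : p.Prime) (hm : 0 < m) (hq : q = p ^ m)
    (he : 2 ≤ e) (hh : 0 < h)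
    {F : Type*} [Field F] [Fintype F] (hF : Fintype.card F = q ^ e)
    (a : F) (ha : a ≠ 0) :
    Function.Bijective (fun x : F => x ^ q ^ h + a * x) ↔
      (-a) ^ ((q ^ e - 1) / (q ^ Nat.gcd e h - 1)) ≠ 1 := by
  have hq2 : 2 ≤ q := by
    rw [hq]
    calc 2 ≤ p := hp.two_le
      _ ≤ p ^ m := Nat.le_self_pow hm.ne' p
  -- characteristic
  obtain ⟨p', hcp'⟩ := CharP.exists F
  haveI := hcp'
  haveI : Fact p'.Prime := ⟨(CharP.char_is_prime F p')⟩
  obtain ⟨nn, _, hcard⟩ := FiniteField.card F p'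
  have hpp' : p' = p := by
    have h1 : p' ∣ q ^ e := by
      rw [← hF, hcard]; exact dvd_pow_self p' nn.ne_zero
    rw [hq, ← pow_mul] at h1
    have := (Nat.Prime.dvd_of_dvd_pow (Fact.out : p'.Prime) h1)
    exact (Nat.prime_dvd_prime_iff_eq Fact.out hp).1 this
  haveI : CharP F p := hpp' ▸ hcp'
  haveI : Fact p.Prime := ⟨hp⟩
  have hQ : q ^ h = p ^ (m * h) := by rw [hq, ← pow_mul]
  have hQ1 : 1 ≤ q ^ h := Nat.one_le_pow _ _ (by omega)
  have key : ∀ x y : F, (x - y) ^ q ^ h = x ^ q ^ h - y ^ q ^ h := by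
    intro x y; rw [hQ]; exact sub_pow_char_pow x y (m * h)
  have step1 : Function.Injective (fun x : F => x ^ q ^ h + a * x) ↔
      ∀ x : F, x ^ q ^ h + a * x = 0 → x = 0 := by
    constructor
    · intro hinj x hx
      have h0 : (fun x : F => x ^ q ^ h + a * x) x =
          (fun x : F => x ^ q ^ h + a * x) 0 := by
        simp only [hx, zero_pow (show q ^ h ≠ 0 by omega), mul_zero, add_zero]
      exact hinj h0
    · intro hker x y hxy
      simp only at hxy
      have h0 : (x - y) ^ q ^ h + a * (x - y) = 0 := by
        rw [key x y]; linear_combination hxy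
      have := hker _ h0
      exact sub_eq_zero.1 this
  have hsplit : ∀ x : F, x ^ q ^ h = x ^ (q ^ h - 1) * x := by
    intro x; rw [← pow_succ, Nat.sub_add_cancel hQ1]
  have step2 : (∀ x : F, x ^ q ^ h + a * x = 0 → x = 0) ↔
      ¬ ∃ x : F, x ≠ 0 ∧ x ^ (q ^ h - 1) = -a := by
    constructor
    · rintro hker ⟨x, hx0, hx⟩
      exact hx0 (hker x (by rw [hsplit, hx]; ring))
    · intro hne x hx
      by_contra hx0
      apply hne
      refine ⟨x, hx0, ?_⟩
      have h' : (x ^ (q ^ h - 1) + a) * x = 0 := by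
        rw [add_mul, ← hsplit]; exact hx
      rcases mul_eq_zero.1 h' with h'' | h''
      · exact eq_neg_of_add_eq_zero_left h''
      · exact absurd h'' hx0
  -- translate to units
  haveI : Fintype Fˣ := Fintype.ofFinite Fˣ
  have hcardU : Fintype.card Fˣ = q ^ e - 1 := by
    rw [← Nat.card_eq_fintype_card, Nat.card_units, Nat.card_eq_fintype_card, hF]
  set b : Fˣ := Units.mk0 (-a) (neg_ne_zero.2 ha) with hb
  have step3 : (∃ x : F, x ≠ 0 ∧ x ^ (q ^ h - 1) = -a) ↔
      (-a) ^ ((q ^ e - 1) / (q ^ Nat.gcd e h - 1)) = 1 := by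
    have hgcd : Nat.gcd (q ^ h - 1) (Fintype.card Fˣ) = q ^ Nat.gcd e h - 1 := by
      rw [hcardU, aux_gcd_pow_sub_one q (by omega), Nat.gcd_comm h e]
    have hmain := aux_pow_surj (q ^ h - 1) b
    rw [hgcd, hcardU] at hmain
    constructor
    · rintro ⟨x, hx0, hx⟩
      have : (Units.mk0 x hx0) ^ (q ^ h - 1) = b := by
        rw [Units.ext_iff, Units.val_pow_eq_pow_val, Units.val_mk0, Units.val_mk0, hx]
      have h1 := hmain.1 ⟨_, this⟩
      have := congrArg (Units.val) h1
      push_cast at this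
      simpa [hb] using this
    · intro h1
      have hb1 : b ^ ((q ^ e - 1) / (q ^ Nat.gcd e h - 1)) = 1 := by
        rw [Units.ext_iff, Units.val_pow_eq_pow_val, Units.val_mk0, Units.val_one, h1]
      obtain ⟨u, hu⟩ := hmain.2 hb1
      refine ⟨(u : F), u.ne_zero, ?_⟩
      have := congrArg (Units.val) hu
      push_cast at this
      simpa [hb] using this
  rw [← Finite.injective_iff_bijective, step1, step2, step3]
end

section
/- Let q ≥ 2 be a prime power, e ≥ 2, h a positive integer, r an integer, and ℓ = q^{e−1} + ⋯ + q + 1. Then r(q^h − 1) − q + 1 ≡ 0 (mod q^e − 1) if and only if gcd(h, e) = 1 and there exists an integer s such that r ≡ s·ℓ + Σ_{i=0}^{k−1} q^{h·i} (mod q^e − 1), where k is the unique integer in {1, …, e−1} with h·k ≡ 1 (mod e). -/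
/-- `r(q^h - 1) - q + 1 ≡ 0 (mod q^e - 1)` if and only if `gcd(h, e) = 1` and
`r ≡ sℓ + Σ_{i=0}^{k-1} q^{hi} (mod q^e - 1)` for some integer `s`, where `k` is the
unique integer in `{1, …, e-1}` with `hk ≡ 1 (mod e)` and `ℓ = q^{e-1} + ⋯ + q + 1`. -/
theorem stmt_7 (p m q e h : ℕ) (hp : p.Prime) (hm : 0 < m) (hq : q = p ^ m)
    (he : 2 ≤ e) (hh : 0 < h) (r : ℤ)
    (ℓ : ℕ) (hℓ : ℓ = ∑ i ∈ Finset.range e, q ^ i) :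
    ((q : ℤ) ^ e - 1) ∣ (r * ((q : ℤ) ^ h - 1) - q + 1) ↔
      (Nat.gcd h e = 1 ∧ ∃ k : ℕ, 1 ≤ k ∧ k ≤ e - 1 ∧ h * k ≡ 1 [MOD e] ∧
        ∃ s : ℤ,
          r ≡ s * ℓ + ∑ i ∈ Finset.range k, (q : ℤ) ^ (h * i) [ZMOD ((q : ℤ) ^ e - 1)]) := by
  have hq2 : 2 ≤ q := by
    subst hq
    calc 2 ≤ p := hp.two_le
    _ ≤ p ^ m := Nat.le_self_pow hm.ne' p
  have hqI : (2 : ℤ) ≤ (q : ℤ) := by exact_mod_cast hq2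
  set N : ℤ := (q : ℤ) ^ e - 1 with hN
  have hℓN : (ℓ : ℤ) * ((q : ℤ) - 1) = N := by
    rw [hℓ]; push_cast; exact geom_sum_mul (q : ℤ) e
  -- For any k with h*k ≡ 1 mod e, the key divisibility equivalence
  have key : ∀ k : ℕ, h * k ≡ 1 [MOD e] → ∀ x : ℤ,
      (N ∣ x * ((q : ℤ) ^ h - 1) ↔ (ℓ : ℤ) ∣ x) := by
    intro k hk x
    obtain ⟨j, hhk⟩ : ∃ j, h * k = e * j + 1 := by
      have h0 : h * k % e = 1 % e := hk
      have h1 : 1 % e = 1 := Nat.mod_eq_of_lt (by omega)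
      refine ⟨h * k / e, ?_⟩
      have h2 := Nat.div_add_mod (h * k) e
      omega
    have hpow : N ∣ (q : ℤ) ^ (h * k) - (q : ℤ) := by
      have h1 : ((q : ℤ) ^ e) ^ j - 1 ∣
          (((q : ℤ) ^ e) ^ j - 1) * (q : ℤ) := Dvd.intro _ rfl
      have h2 : N ∣ ((q : ℤ) ^ e) ^ j - 1 := by
        have := sub_dvd_pow_sub_pow ((q : ℤ) ^ e) 1 j
        simpa using this
      have h3 : (q : ℤ) ^ (h * k) - (q : ℤ) =
          (((q : ℤ) ^ e) ^ j - 1) * (q : ℤ) := by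
        rw [← pow_mul]
        conv_lhs => rw [hhk]
        ring
      rw [h3]
      exact h2.mul_right _
    constructor
    · intro hdvd
      -- N ∣ x * (q^h - 1) → N ∣ x * (q^{hk} - 1) → N ∣ x * (q - 1) → ℓ ∣ x
      have h4 : N ∣ x * ((q : ℤ) ^ (h * k) - 1) := by
        have := hdvd.mul_right (∑ i ∈ Finset.range k, ((q : ℤ) ^ h) ^ i)
        have heq : x * ((q : ℤ) ^ h - 1) * (∑ i ∈ Finset.range k, ((q : ℤ) ^ h) ^ i)
            = x * ((q : ℤ) ^ (h * k) - 1) := by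
          have := geom_sum_mul ((q : ℤ) ^ h) k
          rw [mul_assoc, mul_comm ((q : ℤ) ^ h - 1), this, ← pow_mul]
        rwa [heq] at this
      have h5 : N ∣ x * ((q : ℤ) - 1) := by
        have : x * ((q : ℤ) - 1) = x * ((q : ℤ) ^ (h * k) - 1) -
            x * ((q : ℤ) ^ (h * k) - (q : ℤ)) := by ring
        rw [this]
        exact h4.sub (hpow.mul_left x)
      rw [← hℓN] at h5
      have hq1 : (q : ℤ) - 1 ≠ 0 := by omega
      exact (mul_dvd_mul_iff_right hq1).mp h5
    · rintro ⟨u, rfl⟩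
      have hA : (q : ℤ) ^ h - 1 = (∑ i ∈ Finset.range h, (q : ℤ) ^ i) * ((q : ℤ) - 1) :=
        (geom_sum_mul (q : ℤ) h).symm
      refine ⟨u * (∑ i ∈ Finset.range h, (q : ℤ) ^ i), ?_⟩
      rw [hA, ← hℓN]; ring
  -- particular solution: T * (q^h - 1) ≡ q - 1 mod N
  have hpart : ∀ k : ℕ, h * k ≡ 1 [MOD e] →
      N ∣ (∑ i ∈ Finset.range k, (q : ℤ) ^ (h * i)) * ((q : ℤ) ^ h - 1) - ((q : ℤ) - 1) := by
    intro k hk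
    obtain ⟨j, hhk⟩ : ∃ j, h * k = e * j + 1 := by
      have h0 : h * k % e = 1 % e := hk
      have h1 : 1 % e = 1 := Nat.mod_eq_of_lt (by omega)
      refine ⟨h * k / e, ?_⟩
      have h2 := Nat.div_add_mod (h * k) e
      omega
    have hT : (∑ i ∈ Finset.range k, (q : ℤ) ^ (h * i)) * ((q : ℤ) ^ h - 1)
        = (q : ℤ) ^ (h * k) - 1 := by
      have := geom_sum_mul ((q : ℤ) ^ h) k
      rw [← pow_mul] at this
      rw [← this]
      congr 1
      exact Finset.sum_congr rfl fun i _ => by rw [← pow_mul]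
    rw [hT]
    have h2 : N ∣ ((q : ℤ) ^ e) ^ j - 1 := by
      simpa using sub_dvd_pow_sub_pow ((q : ℤ) ^ e) 1 j
    have h3 : (q : ℤ) ^ (h * k) - 1 - ((q : ℤ) - 1) =
        (((q : ℤ) ^ e) ^ j - 1) * (q : ℤ) := by
      rw [← pow_mul]
      conv_lhs => rw [hhk]
      ring
    rw [h3]
    exact h2.mul_right _
  constructor
  · intro hdvd
    -- first: gcd h e = 1
    have hgcd : Nat.gcd h e = 1 := by
      obtain ⟨d, hd⟩ : ∃ d, d = Nat.gcd h e := ⟨_, rfl⟩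
      rw [← hd]
      have hdh : d ∣ h := hd ▸ Nat.gcd_dvd_left h e
      have hde : d ∣ e := hd ▸ Nat.gcd_dvd_right h e
      have hdpos : 0 < d := hd ▸ Nat.gcd_pos_of_pos_left e hh
      have hdvd1 : (q : ℤ) ^ d - 1 ∣ (q : ℤ) ^ h - 1 := by
        obtain ⟨t, rfl⟩ := hdh
        simpa [pow_mul] using sub_dvd_pow_sub_pow ((q : ℤ) ^ d) 1 t
      have hdvd2 : (q : ℤ) ^ d - 1 ∣ N := by
        obtain ⟨t, ht⟩ := hde
        rw [hN, ht]
        simpa [pow_mul] using sub_dvd_pow_sub_pow ((q : ℤ) ^ d) 1 t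
      have hdvd3 : (q : ℤ) ^ d - 1 ∣ (q : ℤ) - 1 := by
        have h1 : (q : ℤ) ^ d - 1 ∣ r * ((q : ℤ) ^ h - 1) - (q : ℤ) + 1 :=
          hdvd2.trans hdvd
        have h2 : (q : ℤ) ^ d - 1 ∣ r * ((q : ℤ) ^ h - 1) := (hdvd1.mul_left r)
        have : (q : ℤ) - 1 = r * ((q : ℤ) ^ h - 1) - (r * ((q : ℤ) ^ h - 1) - (q : ℤ) + 1) := by
          ring
        rw [this]
        exact h2.sub h1
      have hle : (q : ℤ) ^ d - 1 ≤ (q : ℤ) - 1 :=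
        Int.le_of_dvd (by omega) hdvd3
      have : (q : ℤ) ^ d ≤ (q : ℤ) ^ 1 := by simpa using hle
      have hd1 : d ≤ 1 := by
        exact_mod_cast (pow_le_pow_iff_right₀ (by omega : (1 : ℤ) < q)).mp this
      omega
    refine ⟨hgcd, ?_⟩
    -- construct k
    haveI : NeZero e := ⟨by omega⟩
    set k := ((h : ZMod e)⁻¹).val with hkdef
    have hcop : Nat.Coprime h e := hgcd
    have hkmod : h * k ≡ 1 [MOD e] := by
      have h1 : ((h * k : ℕ) : ZMod e) = ((1 : ℕ) : ZMod e) := by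
        rw [Nat.cast_one, Nat.cast_mul, hkdef]
        exact_mod_cast ZMod.mul_val_inv hcop
      exact (ZMod.natCast_eq_natCast_iff _ _ _).mp h1
    have hklt : k < e := ZMod.val_lt _
    have hkpos : 1 ≤ k := by
      rcases Nat.eq_zero_or_pos k with hk0 | hk0
      · exfalso
        have h0 : h * k % e = 1 % e := hkmod
        rw [hk0, Nat.mul_zero] at h0
        have h1 : 1 % e = 1 := Nat.mod_eq_of_lt (by omega)
        simp [Nat.zero_mod] at h0
        omega
      · exact hk0
    refine ⟨k, hkpos, by omega, hkmod, ?_⟩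
    -- now get s
    set T := ∑ i ∈ Finset.range k, (q : ℤ) ^ (h * i) with hT
    have hdiff : N ∣ (r - T) * ((q : ℤ) ^ h - 1) := by
      have h1 := hpart k hkmod
      have h2 : (r - T) * ((q : ℤ) ^ h - 1) =
          (r * ((q : ℤ) ^ h - 1) - (q : ℤ) + 1) -
          (T * ((q : ℤ) ^ h - 1) - ((q : ℤ) - 1)) := by ring
      rw [h2]
      exact hdvd.sub h1
    obtain ⟨s, hs⟩ := (key k hkmod (r - T)).mp hdiff
    refine ⟨s, ?_⟩
    have : r = s * (ℓ : ℤ) + T := by rw [mul_comm s]; omega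
    rw [this]
  · rintro ⟨hgcd, k, hk1, hk2, hkmod, s, hs⟩
    set T := ∑ i ∈ Finset.range k, (q : ℤ) ^ (h * i) with hT
    have hℓdvd : (ℓ : ℤ) ∣ r - T := by
      have hNd : N ∣ r - (s * ℓ + T) := Int.ModEq.dvd hs.symm
      have hℓN' : (ℓ : ℤ) ∣ N := ⟨(q : ℤ) - 1, hℓN.symm⟩
      have h1 : (ℓ : ℤ) ∣ r - (s * ℓ + T) := hℓN'.trans hNd
      have : r - T = (r - (s * ℓ + T)) + s * ℓ := by ring
      rw [this]
      exact h1.add (Dvd.intro_left s rfl)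
    have hdiff : N ∣ (r - T) * ((q : ℤ) ^ h - 1) := (key k hkmod (r - T)).mpr hℓdvd
    have h1 := hpart k hkmod
    have h2 : r * ((q : ℤ) ^ h - 1) - (q : ℤ) + 1 =
        (r - T) * ((q : ℤ) ^ h - 1) + (T * ((q : ℤ) ^ h - 1) - ((q : ℤ) - 1)) := by ring
    rw [h2]
    exact hdiff.add h1
end

section
/- Let q be a prime power, e ≥ 2, a ∈ F_{q^e} nonzero, r ≥ 1, f(x) = x^r(x^{q−1} + a), and ℓ = q^{e−1} + ⋯ + q + 1. If (−a)^ℓ ≠ 1, gcd(r, q−1) = 1, and the least nonnegative residue of r modulo ℓ lies in {1, ℓ − q}, then f permutes F_{q^e}. -/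
private lemma geom_nat {q : ℕ} (hq : 1 ≤ q) (e : ℕ) :
    (q - 1) * (∑ i ∈ Finset.range e, q ^ i) = q ^ e - 1 := by
  have h1 : (1:ℕ) ≤ q ^ e := Nat.one_le_pow _ _ hq
  have hgeo := geom_sum_mul (x := (q : ℤ)) (n := e)
  zify [hq, h1]
  linarith [hgeo]

private lemma root_extract {F : Type*} [Field F] [Fintype F] {q e ℓ : ℕ}
    (hcard : Fintype.card F = q ^ e)
    (hℓpos : 0 < ℓ) (hsl : (q - 1) * ℓ = q ^ e - 1)
    {y : F} (hy : y ^ ℓ = 1) : ∃ v : F, v ≠ 0 ∧ v ^ (q - 1) = y := by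
  classical
  have hy0 : y ≠ 0 := by
    intro h; rw [h, zero_pow hℓpos.ne'] at hy; exact zero_ne_one hy
  obtain ⟨g, hg⟩ := IsCyclic.exists_generator (α := Fˣ)
  have hord : orderOf g = q ^ e - 1 := by
    rw [orderOf_eq_card_of_forall_mem_zpowers hg, Nat.card_eq_fintype_card, Fintype.card_units, hcard]
  obtain ⟨k, hk⟩ : ∃ k : ℕ, g ^ k = Units.mk0 y hy0 := by
    have := hg (Units.mk0 y hy0)
    rwa [← mem_powers_iff_mem_zpowers, Submonoid.mem_powers_iff] at this
  have hyl : (Units.mk0 y hy0) ^ ℓ = 1 := by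
    ext; push_cast; exact hy
  have hdvd1 : orderOf g ∣ k * ℓ :=
    orderOf_dvd_of_pow_eq_one (by rw [pow_mul, hk]; exact hyl)
  rw [hord, ← hsl] at hdvd1
  have hdvd : (q - 1) ∣ k := by
    have := (Nat.mul_dvd_mul_iff_right hℓpos).mp hdvd1
    exact this
  obtain ⟨t, ht⟩ := hdvd
  refine ⟨((g ^ t : Fˣ) : F), Units.ne_zero _, ?_⟩
  have h2 : (g ^ t) ^ (q - 1) = Units.mk0 y hy0 := by
    rw [← pow_mul, mul_comm t (q-1), ← ht, hk]
  have := congrArg (Units.val) h2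
  push_cast at this
  simpa using this

section Main

variable {F : Type*} [Field F] [Fintype F] {p m q e ℓ : ℕ}

private lemma core (hp : Fact p.Prime) [CharP F p] (hm : 0 < m) (hq : q = p ^ m)
    (hcard : Fintype.card F = q ^ e)
    (hsl : (q - 1) * ℓ = q ^ e - 1) (hℓpos : 0 < ℓ)
    {b : F} (hB : (-b) ^ ℓ ≠ 1) {y : F} (hy : y ^ ℓ = 1) :
    ∃ x : F, x ^ ℓ = 1 ∧ x * (x + b) ^ (q - 1) = y := by
  have hq1 : 1 ≤ q := by
    rw [hq]; exact Nat.one_le_pow _ _ hp.out.pos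
  have hq1' : q - 1 + 1 = q := Nat.succ_pred_eq_of_pos hq1
  obtain ⟨v, hv0, hvs⟩ := root_extract hcard hℓpos hsl hy
  set L : F → F := fun u => u ^ q + b * u with hL
  have hLinj : Function.Injective L := by
    intro u w h
    by_contra hne
    have ht0 : u - w ≠ 0 := sub_ne_zero.mpr hne
    have ht : (u - w) ^ q + b * (u - w) = 0 := by
      have : (u - w) ^ q = u ^ q - w ^ q := by
        rw [hq]; exact sub_pow_char_pow ..
      rw [this]
      simp only [hL] at h
      linear_combination h
    have hts : (u - w) ^ (q - 1) = -b := by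
      have h1 : (u - w) ^ (q - 1) * (u - w) = -b * (u - w) := by
        rw [← pow_succ, hq1']
        linear_combination ht
      exact mul_right_cancel₀ ht0 h1
    apply hB
    rw [← hts, ← pow_mul, hsl, ← hcard]
    exact FiniteField.pow_card_sub_one_eq_one _ ht0
  have hLsurj : Function.Surjective L := Finite.injective_iff_surjective.mp hLinj
  obtain ⟨u, hu⟩ := hLsurj v
  have hu0 : u ≠ 0 := by
    intro h
    rw [h] at hu
    simp only [hL] at hu
    rw [zero_pow (by omega), mul_zero, add_zero] at hu
    exact hv0 hu.symm
  refine ⟨u ^ (q - 1), ?_, ?_⟩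
  · rw [← pow_mul, hsl, ← hcard]
    exact FiniteField.pow_card_sub_one_eq_one _ hu0
  · have key : u * (u ^ (q - 1) + b) = v := by
      rw [mul_add, ← pow_succ', hq1', mul_comm u b]
      exact hu
    calc u ^ (q-1) * (u ^ (q-1) + b) ^ (q-1)
        = (u * (u ^ (q-1) + b)) ^ (q-1) := by rw [mul_pow]
      _ = v ^ (q - 1) := by rw [key]
      _ = y := hvs

private lemma surj_lemma (hp : Fact p.Prime) [CharP F p] (hm : 0 < m) (hq : q = p ^ m)
    (he : 2 ≤ e) (hcard : Fintype.card F = q ^ e)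
    (hsl : (q - 1) * ℓ = q ^ e - 1) (hql : q + 1 ≤ ℓ)
    {a : F} (ha : a ≠ 0) {r : ℕ}
    (hA : (-a) ^ ℓ ≠ 1)
    (hres : r % ℓ = 1 ∨ r % ℓ = ℓ - q) :
    ∀ y : F, y ^ ℓ = 1 → ∃ x : F, x ^ ℓ = 1 ∧ x ^ r * (x + a) ^ (q - 1) = y := by
  have hℓpos : 0 < ℓ := by omega
  have hq1 : 1 ≤ q := by rw [hq]; exact Nat.one_le_pow _ _ hp.out.pos
  have hq1' : q - 1 + 1 = q := Nat.succ_pred_eq_of_pos hq1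
  have hpowmod : ∀ x : F, x ^ ℓ = 1 → x ^ r = x ^ (r % ℓ) := by
    intro x hx
    conv_lhs => rw [← Nat.div_add_mod r ℓ]
    rw [pow_add, pow_mul, hx, one_pow, one_mul]
  intro y hy
  rcases hres with h1 | h2
  · obtain ⟨x, hx1, hx2⟩ := core hp hm hq hcard hsl hℓpos hA hy
    refine ⟨x, hx1, ?_⟩
    rw [hpowmod x hx1, h1, pow_one]
    exact hx2
  · set b : F := a⁻¹ with hb
    have hb0 : b ≠ 0 := inv_ne_zero ha
    have hB : (-b) ^ ℓ ≠ 1 := by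
      intro h
      apply hA
      have : ((-a) ^ ℓ)⁻¹ = 1 := by
        rw [← inv_pow, ← neg_inv, ← hb, h]
      rwa [inv_eq_one] at this
    have has : (a ^ (q - 1)) ≠ 0 := pow_ne_zero _ ha
    have hasl : (a ^ (q - 1)) ^ ℓ = 1 := by
      rw [← pow_mul, hsl, ← hcard]
      exact FiniteField.pow_card_sub_one_eq_one _ ha
    set y' : F := (a ^ (q - 1))⁻¹ * y with hy'
    have hy'l : y' ^ ℓ = 1 := by
      rw [hy', mul_pow, inv_pow, hasl, hy, inv_one, one_mul]
    obtain ⟨z, hz1, hz2⟩ := core hp hm hq hcard hsl hℓpos hB hy'l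
    have hz0 : z ≠ 0 := by
      intro h; rw [h, zero_pow hℓpos.ne'] at hz1; exact zero_ne_one hz1
    refine ⟨z⁻¹, ?_, ?_⟩
    · rw [inv_pow, hz1, inv_one]
    · have hx1 : (z⁻¹) ^ ℓ = 1 := by rw [inv_pow, hz1, inv_one]
      rw [hpowmod _ hx1, h2]
      have hzq : (z⁻¹) ^ (ℓ - q) = z ^ q := by
        have h3 : z ^ (ℓ - q) * z ^ q = 1 := by rw [← pow_add, Nat.sub_add_cancel (by omega), hz1]
        rw [inv_pow]
        field_simp
        rw [← h3]
      rw [hzq]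
      have hadd : z⁻¹ + a = z⁻¹ * a * (z + b) := by
        rw [hb]
        field_simp
        ring
      rw [hadd]
      have : z ^ q * (z⁻¹ * a * (z + b)) ^ (q - 1)
          = (z ^ q * (z⁻¹) ^ (q-1)) * (a ^ (q-1) * ((z + b) ^ (q-1))) := by
        rw [mul_pow, mul_pow]; ring
      rw [this]
      have hzz : z ^ q * (z⁻¹) ^ (q - 1) = z := by
        rw [inv_pow, ← hq1', pow_succ]
        field_simp
        rw [Nat.add_sub_cancel]
      rw [hzz]
      calc z * (a ^ (q-1) * ((z + b) ^ (q-1)))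
          = a ^ (q-1) * (z * (z + b) ^ (q-1)) := by ring
        _ = a ^ (q-1) * y' := by rw [hz2]
        _ = y := by rw [hy', ← mul_assoc, mul_inv_cancel₀ has, one_mul]

end Main

/-- If `(-a)^ℓ ≠ 1`, `gcd(r, q-1) = 1`, and `r mod ℓ ∈ {1, ℓ - q}`, then
`f(x) = x^r (x^{q-1} + a)` permutes `F_{q^e}`, where `ℓ = q^{e-1} + ⋯ + q + 1`. -/
theorem stmt_9 (p m q e : ℕ) (hp : p.Prime) (hm : 0 < m) (hq : q = p ^ m)
    (he : 2 ≤ e) {F : Type*} [Field F] [Fintype F] (hF : Fintype.card F = q ^ e)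
    (a : F) (ha : a ≠ 0) (r : ℕ) (hr : 1 ≤ r)
    (ℓ : ℕ) (hℓ : ℓ = ∑ i ∈ Finset.range e, q ^ i)
    (hA : (-a) ^ ℓ ≠ 1) (hgcd : Nat.gcd r (q - 1) = 1)
    (hres : r % ℓ = 1 ∨ r % ℓ = ℓ - q) :
    Function.Bijective (fun x : F => x ^ r * (x ^ (q - 1) + a)) := by
  haveI hpf : Fact p.Prime := ⟨hp⟩
  have hq2 : 2 ≤ q := by
    have h1 := Nat.le_self_pow hm.ne' p
    have h2 := hp.two_le
    omega
  have hsl : (q - 1) * ℓ = q ^ e - 1 := by rw [hℓ]; exact geom_nat (by omega) e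
  have hql : q + 1 ≤ ℓ := by
    have hsub : ({0, 1} : Finset ℕ) ⊆ Finset.range e := by
      intro i hi
      simp only [Finset.mem_insert, Finset.mem_singleton] at hi
      rcases hi with h | h <;> simp [h] <;> omega
    have := Finset.sum_le_sum_of_subset (f := fun i => q ^ i) hsub
    rw [← hℓ] at this
    simp at this
    omega
  have hℓpos : 0 < ℓ := by omega
  -- characteristic
  haveI hcharp : CharP F p := by
    obtain ⟨p', hp'inst⟩ := CharP.exists F
    obtain ⟨n, hp'prime, hcardp'⟩ := FiniteField.card F p'
    have hpp' : p = p' := by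
      have h1 : p ∣ Fintype.card F := by
        rw [hF, hq]
        rw [← pow_mul]
        exact dvd_pow_self p (by positivity)
      rw [hcardp'] at h1
      have := hp.dvd_of_dvd_pow h1
      exact ((Nat.prime_dvd_prime_iff_eq hp hp'prime).mp this)
    rwa [hpp']
  -- basic facts
  have hpowcard : ∀ x : F, x ≠ 0 → x ^ ((q - 1) * ℓ) = 1 := by
    intro x hx
    rw [hsl, ← hF]
    exact FiniteField.pow_card_sub_one_eq_one _ hx
  have hxa : ∀ x : F, x ^ ℓ = 1 → x + a ≠ 0 := by
    intro x hx h
    apply hA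
    have : x = -a := by linear_combination h
    rw [← this]; exact hx
  have hfz : ∀ x : F, x ^ r * (x ^ (q - 1) + a) = 0 → x = 0 := by
    intro x hx
    rcases mul_eq_zero.mp hx with h | h
    · exact pow_eq_zero_iff (by omega) |>.mp h
    · by_contra hx0
      apply hA
      have hxl : (x ^ (q-1)) ^ ℓ = 1 := by rw [← pow_mul]; exact hpowcard x hx0
      have : x ^ (q - 1) = -a := by linear_combination h
      rw [← this]; exact hxl
  -- the subtype of ℓ-th roots of unity and the induced map
  set μ := {t : F // t ^ ℓ = 1} with hμ
  have hmapsto : ∀ t : F, t ^ ℓ = 1 → (t ^ r * (t + a) ^ (q - 1)) ^ ℓ = 1 := by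
    intro t ht
    have hta : t + a ≠ 0 := hxa t ht
    rw [mul_pow, ← pow_mul, ← pow_mul, mul_comm r ℓ, pow_mul, ht, one_pow, one_mul,
      mul_comm (q-1) ℓ, mul_comm ℓ (q-1)]
    exact hpowcard _ hta
  set G : μ → μ := fun t => ⟨t.1 ^ r * (t.1 + a) ^ (q - 1), hmapsto t.1 t.2⟩ with hG
  have hGsurj : Function.Surjective G := by
    rintro ⟨y, hy⟩
    obtain ⟨x, hx1, hx2⟩ := surj_lemma hpf hm hq he hF hsl hql ha hA hres y hy
    exact ⟨⟨x, hx1⟩, Subtype.ext hx2⟩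
  have hGinj : Function.Injective G := Finite.injective_iff_surjective.mpr hGsurj
  -- main injectivity
  have hinj : Function.Injective (fun x : F => x ^ r * (x ^ (q - 1) + a)) := by
    intro x y h
    simp only at h
    by_cases hx0 : x = 0
    · subst hx0
      rw [zero_pow (by omega), zero_mul] at h
      exact (hfz y h.symm).symm
    by_cases hy0 : y = 0
    · subst hy0
      rw [zero_pow (by omega), zero_mul] at h
      exact hfz x h
    have hxs : (x ^ (q-1)) ^ ℓ = 1 := by rw [← pow_mul]; exact hpowcard x hx0
    have hys : (y ^ (q-1)) ^ ℓ = 1 := by rw [← pow_mul]; exact hpowcard y hy0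
    have hGeq : G ⟨x ^ (q-1), hxs⟩ = G ⟨y ^ (q-1), hys⟩ := by
      apply Subtype.ext
      simp only [hG]
      calc (x ^ (q-1)) ^ r * (x ^ (q-1) + a) ^ (q-1)
          = (x ^ r * (x ^ (q-1) + a)) ^ (q-1) := by
            rw [mul_pow, ← pow_mul, ← pow_mul, mul_comm (q-1) r]
        _ = (y ^ r * (y ^ (q-1) + a)) ^ (q-1) := by rw [h]
        _ = (y ^ (q-1)) ^ r * (y ^ (q-1) + a) ^ (q-1) := by
            rw [mul_pow, ← pow_mul, ← pow_mul, mul_comm (q-1) r]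
    have hss : x ^ (q-1) = y ^ (q-1) := by
      have := hGinj hGeq
      exact congrArg Subtype.val this
    have hrr : x ^ r = y ^ r := by
      rw [hss] at h
      exact mul_right_cancel₀ (hxa _ hys) h
    -- conclude with gcd argument
    set ζ : F := x / y with hζ
    have hζs : ζ ^ (q - 1) = 1 := by
      rw [hζ, div_pow, hss, div_self (pow_ne_zero _ hy0)]
    have hζr : ζ ^ r = 1 := by
      rw [hζ, div_pow, hrr, div_self (pow_ne_zero _ hy0)]
    have hd1 : orderOf ζ ∣ r := orderOf_dvd_of_pow_eq_one hζr
    have hd2 : orderOf ζ ∣ (q - 1) := orderOf_dvd_of_pow_eq_one hζs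
    have : orderOf ζ ∣ 1 := hgcd ▸ Nat.dvd_gcd hd1 hd2
    have hζ1 : ζ = 1 := orderOf_eq_one_iff.mp (Nat.dvd_one.mp this)
    rw [hζ] at hζ1
    exact (div_eq_one_iff_eq hy0).mp hζ1
  exact Finite.injective_iff_bijective.mp hinj
end

section
/- Let q be a prime power, e ≥ 2 odd, a ∈ F_{q^e} nonzero, r ≥ 1, f(x) = x^r(x^{q−1} + a), and ℓ = q^{e−1} + ⋯ + q + 1. If (−a)^ℓ ≠ 1, gcd(r, q−1) = 1, and the least nonnegative residue of r modulo ℓ lies in {q^{(e+1)/2} + 1, ℓ − q^{(e+1)/2} − q}, then f permutes F_{q^e}. -/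
open Finset

section Aux

variable {F : Type*} [Field F] [Fintype F]

private lemma myCharP (p m q e : ℕ) (hp : p.Prime) (hm : 0 < m) (hq : q = p ^ m)
    (he : 1 ≤ e) (hF : Fintype.card F = q ^ e) : CharP F p := by
  obtain ⟨p', hp'⟩ := CharP.exists F
  haveI := hp'
  have hp'prime : p'.Prime := CharP.char_is_prime F p'
  haveI : Fact p'.Prime := ⟨hp'prime⟩
  obtain ⟨n, -, hn⟩ := FiniteField.card F p'
  have hcard : p ^ (m * e) = p' ^ (n : ℕ) := by
    rw [pow_mul, ← hq, ← hF, hn]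
  have hdvd : p ∣ p' ^ (n : ℕ) := by
    rw [← hcard]
    exact dvd_pow_self p (by positivity)
  have : p = p' := (Nat.prime_dvd_prime_iff_eq hp hp'prime).mp (hp.dvd_of_dvd_pow hdvd)
  subst this
  exact hp'

private lemma geomNat (q e ℓ : ℕ) (hq : 1 ≤ q) (hℓ : ℓ = ∑ i ∈ range e, q ^ i) :
    (q - 1) * ℓ = q ^ e - 1 := by
  have h1 : 1 ≤ q ^ e := Nat.one_le_pow _ _ (by omega)
  zify [hq, h1]
  subst hℓ
  push_cast
  rw [mul_comm]
  exact geom_sum_mul _ _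

private lemma key_identity (p m q e s ℓ : ℕ) (hp : p.Prime) (hm : 0 < m) (hq : q = p ^ m)
    (he : 2 ≤ e) (hs : 2 * s = e + 1) (hℓ : ℓ = ∑ i ∈ range e, q ^ i)
    (hF : Fintype.card F = q ^ e)
    (z lam : F) (hlam : lam ^ q = lam) :
    (z ^ q ^ s * z ^ q - lam) ^ ℓ = (z ^ q ^ s * z - lam) ^ ℓ := by
  haveI : CharP F p := myCharP p m q e hp hm hq (by omega) hF
  haveI : Fact p.Prime := ⟨hp⟩
  have hq2 : 2 ≤ q := by rw [hq]; exact Nat.one_lt_pow (by omega) hp.one_lt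
  have hepos : 0 < e := by omega
  -- basic power tools
  have hlam_pow : ∀ i : ℕ, lam ^ q ^ i = lam := by
    intro i
    induction i with
    | zero => simp
    | succ n ih => rw [pow_succ, pow_mul, ih, hlam]
  have hsubpow : ∀ (x y : F) (i : ℕ), (x - y) ^ q ^ i = x ^ q ^ i - y ^ q ^ i := by
    intro x y i
    rw [hq, ← pow_mul]
    exact sub_pow_char_pow x y (m * i)
  have hz_e : ∀ x : F, x ^ q ^ e = x := by
    intro x; rw [← hF]; exact FiniteField.pow_card x
  have hz_et : ∀ (t : ℕ) (x : F), x ^ q ^ (e * t) = x := by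
    intro t
    induction t with
    | zero => intro x; simp
    | succ n ih =>
      intro x
      have : e * (n + 1) = e * n + e := by ring
      rw [this, pow_add, pow_mul, ih, hz_e]
  have hz_mod : ∀ (k : ℕ) (x : F), x ^ q ^ k = x ^ q ^ (k % e) := by
    intro k x
    conv_lhs => rw [← Nat.div_add_mod k e]
    rw [Nat.add_comm, pow_add, pow_mul, hz_et]
  -- the cyclic family
  set c : ℕ → F := fun j => z ^ q ^ (j % e) with hc
  have hcmod : ∀ j j' : ℕ, j % e = j' % e → c j = c j' := by
    intro j j' h; simp only [hc, h]
  -- expand both sides as products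
  have hL : (z ^ q ^ s * z ^ q - lam) ^ ℓ = ∏ i ∈ range e, (c (s + i) * c (i + 1) - lam) := by
    rw [hℓ, ← Finset.prod_pow_eq_pow_sum]
    refine Finset.prod_congr rfl fun i _ => ?_
    rw [hsubpow, mul_pow, hlam_pow, ← pow_mul, ← pow_mul, ← pow_add q s i, ← pow_succ' q i]
    rw [hz_mod (s + i) z, hz_mod (i + 1) z]
  have hR : (z ^ q ^ s * z - lam) ^ ℓ = ∏ i ∈ range e, (c (s + i) * c i - lam) := by
    rw [hℓ, ← Finset.prod_pow_eq_pow_sum]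
    refine Finset.prod_congr rfl fun i _ => ?_
    rw [hsubpow, mul_pow, hlam_pow, ← pow_mul, ← pow_add q s i]
    rw [hz_mod (s + i) z, hz_mod i z]
  rw [hL, hR]
  -- reindex: i ↦ (i + s) % e
  have hse : s < e := by omega
  refine Finset.prod_bij' (fun i _ => (i + s) % e) (fun j _ => (j + (e - s)) % e)
    ?_ ?_ ?_ ?_ ?_
  · intro i hi; exact Finset.mem_range.mpr (Nat.mod_lt _ hepos)
  · intro j hj; exact Finset.mem_range.mpr (Nat.mod_lt _ hepos)
  · intro i hi
    have hi' : i < e := Finset.mem_range.mp hi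
    show ((i + s) % e + (e - s)) % e = i
    rw [Nat.mod_add_mod]
    have : i + s + (e - s) = i + e := by omega
    rw [this, Nat.add_mod_right, Nat.mod_eq_of_lt hi']
  · intro j hj
    have hj' : j < e := Finset.mem_range.mp hj
    show ((j + (e - s)) % e + s) % e = j
    rw [Nat.mod_add_mod]
    have : j + (e - s) + s = j + e := by omega
    rw [this, Nat.add_mod_right, Nat.mod_eq_of_lt hj']
  · intro i hi
    show c (s + i) * c (i + 1) - lam = c (s + (i + s) % e) * c ((i + s) % e) - lam
    have h1 : c (s + (i + s) % e) = c (i + 1) := by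
      apply hcmod
      rw [Nat.add_mod, Nat.mod_mod_of_dvd _ dvd_rfl, ← Nat.add_mod]
      have : s + (i + s) = i + 1 + e := by omega
      rw [this, Nat.add_mod_right]
    have h2 : c ((i + s) % e) = c (s + i) := by
      apply hcmod
      rw [Nat.mod_mod_of_dvd _ dvd_rfl, Nat.add_comm]
    rw [h1, h2, mul_comm]

private lemma core_aux (q e ℓ : ℕ) (hq2 : 2 ≤ q) (hgeom : (q - 1) * ℓ = q ^ e - 1)
    (hF : Fintype.card F = q ^ e)
    (a d X Y : F) (ha : a ≠ 0) (hd : d ≠ 0)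
    (hA : (-a) ^ ℓ ≠ 1) (hXY : X ^ ℓ = Y ^ ℓ)
    (heq : d ^ q * X = -a * (d * Y)) : X = 0 ∧ Y = 0 := by
  by_cases hY : Y = 0
  · refine ⟨?_, hY⟩
    have h0 : d ^ q * X = 0 := by rw [heq, hY, mul_zero, mul_zero]
    exact (mul_eq_zero.mp h0).resolve_left (pow_ne_zero _ hd)
  · exfalso
    have hX : X ≠ 0 := by
      intro h0
      have h1 : -a * (d * Y) = 0 := by rw [← heq, h0, mul_zero]
      rcases mul_eq_zero.mp h1 with h2 | h2
      · exact ha (neg_eq_zero.mp h2)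
      · rcases mul_eq_zero.mp h2 with h3 | h3
        · exact hd h3
        · exact hY h3
    have hdl : d ^ ((q - 1) * ℓ) = 1 := by
      rw [hgeom, ← hF]
      exact FiniteField.pow_card_sub_one_eq_one d hd
    have h2 : (d ^ q * X) ^ ℓ = (-a * (d * Y)) ^ ℓ := by rw [heq]
    rw [mul_pow, mul_pow, mul_pow, ← pow_mul] at h2
    have hql : q * ℓ = (q - 1) * ℓ + ℓ := by
      have h3 : (q - 1) * ℓ + ℓ = ((q - 1) + 1) * ℓ := by ring
      rw [h3]
      congr 1
      omega
    rw [hql, pow_add, hdl, one_mul, ← hXY] at h2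
    -- h2 : d ^ ℓ * X ^ ℓ = (-a)^ℓ * (d ^ ℓ * X ^ ℓ)
    have hnz : d ^ ℓ * X ^ ℓ ≠ 0 := mul_ne_zero (pow_ne_zero _ hd) (pow_ne_zero _ hX)
    have h4 : 1 * (d ^ ℓ * X ^ ℓ) = (-a) ^ ℓ * (d ^ ℓ * X ^ ℓ) := by rw [one_mul, ← h2]
    exact hA (mul_right_cancel₀ hnz h4).symm

private lemma core_s10 (p m q e s ℓ : ℕ) (hp : p.Prime) (hm : 0 < m) (hq : q = p ^ m)
    (he : 2 ≤ e) (hs : 2 * s = e + 1) (hℓ : ℓ = ∑ i ∈ range e, q ^ i)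
    (hF : Fintype.card F = q ^ e)
    (a z d lam : F) (ha : a ≠ 0) (hz : z ≠ 0) (hd : d ≠ 0)
    (hA : (-a) ^ ℓ ≠ 1) (hlam : lam ^ (q - 1) = 1)
    (heq : d ^ q * (z ^ q ^ s * z ^ q - lam) = -a * (d * (z ^ q ^ s * z - lam)) ∨
           d ^ q * (z ^ q ^ s * z - lam) = -a * (d * (z ^ q ^ s * z ^ q - lam))) :
    z ^ q = z := by
  have hq2 : 2 ≤ q := by rw [hq]; exact Nat.one_lt_pow (by omega) hp.one_lt
  have hgeom : (q - 1) * ℓ = q ^ e - 1 := geomNat q e ℓ (by omega) hℓ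
  have hlamq : lam ^ q = lam := by
    have h1 : q = (q - 1) + 1 := by omega
    rw [h1, pow_succ, hlam, one_mul]
  have hkey : (z ^ q ^ s * z ^ q - lam) ^ ℓ = (z ^ q ^ s * z - lam) ^ ℓ :=
    key_identity p m q e s ℓ hp hm hq he hs hℓ hF z lam hlamq
  have hfin : z ^ q ^ s * z ^ q - lam = 0 → z ^ q ^ s * z - lam = 0 → z ^ q = z := by
    intro h1 h2
    have h3 : z ^ q ^ s * z ^ q = z ^ q ^ s * z := by
      rw [sub_eq_zero] at h1 h2
      rw [h1, h2]
    exact mul_left_cancel₀ (pow_ne_zero _ hz) h3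
  rcases heq with heq | heq
  · obtain ⟨h1, h2⟩ := core_aux q e ℓ hq2 hgeom hF a d _ _ ha hd hA hkey heq
    exact hfin h1 h2
  · obtain ⟨h1, h2⟩ := core_aux q e ℓ hq2 hgeom hF a d _ _ ha hd hA hkey.symm heq
    exact hfin h2 h1

end Aux

/-- For odd `e`, if `(-a)^ℓ ≠ 1`, `gcd(r, q-1) = 1`, and
`r mod ℓ ∈ {q^{(e+1)/2} + 1, ℓ - q^{(e+1)/2} - q}`, then `f(x) = x^r (x^{q-1} + a)`
permutes `F_{q^e}`, where `ℓ = q^{e-1} + ⋯ + q + 1`. -/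
theorem stmt_10 (p m q e : ℕ) (hp : p.Prime) (hm : 0 < m) (hq : q = p ^ m)
    (he : 2 ≤ e) (heodd : Odd e)
    {F : Type*} [Field F] [Fintype F] (hF : Fintype.card F = q ^ e)
    (a : F) (ha : a ≠ 0) (r : ℕ) (hr : 1 ≤ r)
    (ℓ : ℕ) (hℓ : ℓ = ∑ i ∈ Finset.range e, q ^ i)
    (hA : (-a) ^ ℓ ≠ 1) (hgcd : Nat.gcd r (q - 1) = 1)
    (hres : r % ℓ = q ^ ((e + 1) / 2) + 1 ∨ r % ℓ = ℓ - q ^ ((e + 1) / 2) - q) :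
    Function.Bijective (fun x : F => x ^ r * (x ^ (q - 1) + a)) := by
  obtain ⟨k, hk⟩ := heodd
  set s := (e + 1) / 2 with hsdef
  have hs : 2 * s = e + 1 := by omega
  have he3 : 3 ≤ e := by omega
  have hs2 : 2 ≤ s := by omega
  have hq2 : 2 ≤ q := by rw [hq]; exact Nat.one_lt_pow (by omega) hp.one_lt
  have hgeom : (q - 1) * ℓ = q ^ e - 1 := geomNat q e ℓ (by omega) hℓ
  have hqe2 : 2 ≤ q ^ e := le_trans hq2 (Nat.le_self_pow (by omega) q)
  have hℓpos : 0 < ℓ := by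
    rcases Nat.eq_zero_or_pos ℓ with h | h
    · rw [h, Nat.mul_zero] at hgeom; omega
    · exact h
  have hQ1 : ∀ w : F, w ≠ 0 → w ^ ((q - 1) * ℓ) = 1 := by
    intro w hw
    rw [hgeom, ← hF]
    exact FiniteField.pow_card_sub_one_eq_one w hw
  have hqa : ∀ w : F, w ≠ 0 → w ^ (q - 1) + a ≠ 0 := by
    intro w hw h0
    apply hA
    have h1 : w ^ (q - 1) = -a := by
      rw [add_eq_zero_iff_eq_neg] at h0; exact h0
    rw [← h1, ← pow_mul]
    exact hQ1 w hw
  have hinj : Function.Injective (fun x : F => x ^ r * (x ^ (q - 1) + a)) := by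
    intro x y hxy
    simp only at hxy
    by_cases hx0 : x = 0
    · subst hx0
      rw [zero_pow (by omega : r ≠ 0), zero_mul] at hxy
      by_contra hy0
      have hy0' : y ≠ 0 := fun h => hy0 h.symm
      exact (mul_ne_zero (pow_ne_zero _ hy0') (hqa y hy0')) hxy.symm
    by_cases hy0 : y = 0
    · subst hy0
      rw [zero_pow (by omega : r ≠ 0), zero_mul] at hxy
      exact absurd hxy (mul_ne_zero (pow_ne_zero _ hx0) (hqa x hx0))
    -- both nonzero
    have hfr : ∀ w : F, w ^ r * (w ^ (q - 1) + a) = w ^ (r - 1) * (w ^ q + a * w) := by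
      intro w
      have h1 : w ^ r = w ^ (r - 1) * w := by
        rw [← pow_succ]; congr 1; omega
      have h2 : w ^ q = w ^ (q - 1) * w := by
        rw [← pow_succ]; congr 1; omega
      rw [h1, h2]; ring
    rw [hfr, hfr] at hxy
    have hxq : x ^ q = x ^ (q - 1) * x := by rw [← pow_succ]; congr 1; omega
    have hyq : y ^ q = y ^ (q - 1) * y := by rw [← pow_succ]; congr 1; omega
    have hLx : x ^ q + a * x ≠ 0 := by
      have h2 : x ^ q + a * x = x * (x ^ (q - 1) + a) := by rw [hxq]; ring
      rw [h2]; exact mul_ne_zero hx0 (hqa x hx0)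
    have hLy : y ^ q + a * y ≠ 0 := by
      have h2 : y ^ q + a * y = y * (y ^ (q - 1) + a) := by rw [hyq]; ring
      rw [h2]; exact mul_ne_zero hy0 (hqa y hy0)
    have hpow0 : (x ^ (r - 1)) ^ (q - 1) * (x ^ q + a * x) ^ (q - 1)
        = (y ^ (r - 1)) ^ (q - 1) * (y ^ q + a * y) ^ (q - 1) := by
      rw [← mul_pow, ← mul_pow, hxy]
    have hmod : ∀ w : F, w ≠ 0 → (w ^ (r - 1)) ^ (q - 1) = (w ^ (q - 1)) ^ ((r - 1) % ℓ) := by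
      intro w hw
      have h1 : (w ^ (q - 1)) ^ ℓ = 1 := by rw [← pow_mul]; exact hQ1 w hw
      rw [← pow_mul, Nat.mul_comm, pow_mul]
      conv_lhs => rw [← Nat.div_add_mod (r - 1) ℓ]
      rw [pow_add, pow_mul, h1, one_pow, one_mul]
    rw [hmod x hx0, hmod y hy0] at hpow0
    set z := x * y⁻¹ with hzdef
    have hz0 : z ≠ 0 := mul_ne_zero hx0 (inv_ne_zero hy0)
    have hxz : x = z * y := by rw [hzdef]; field_simp
    have hzq : z ^ q = z := by
      rcases hres with hres1 | hres2
      · -- case 1 : r ≡ q^s + 1 (mod ℓ)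
        have hlt : q ^ s + 1 < ℓ := by rw [← hres1]; exact Nat.mod_lt r hℓpos
        have hrm : (r - 1) % ℓ = q ^ s := by
          have hdm := Nat.div_add_mod r ℓ
          have h1 : r - 1 = ℓ * (r / ℓ) + q ^ s := by omega
          rw [h1, Nat.mul_add_mod]
          exact Nat.mod_eq_of_lt (by omega)
        rw [hrm, pow_right_comm x, pow_right_comm y, ← mul_pow, ← mul_pow] at hpow0
        have hYne : y ^ q ^ s * (y ^ q + a * y) ≠ 0 := mul_ne_zero (pow_ne_zero _ hy0) hLy
        set lam := (x ^ q ^ s * (x ^ q + a * x)) * (y ^ q ^ s * (y ^ q + a * y))⁻¹ with hlamdef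
        have hlam1 : lam ^ (q - 1) = 1 := by
          rw [hlamdef, mul_pow, inv_pow, hpow0, mul_inv_cancel₀ (pow_ne_zero _ hYne)]
        have hE : x ^ q ^ s * (x ^ q + a * x) = lam * (y ^ q ^ s * (y ^ q + a * y)) := by
          rw [hlamdef, inv_mul_cancel_right₀ hYne]
        rw [hxz] at hE
        have hE' : z ^ q ^ s * ((z * y) ^ q + a * (z * y)) = lam * (y ^ q + a * y) := by
          apply mul_left_cancel₀ (pow_ne_zero (q ^ s) hy0)
          linear_combination hE
        apply core_s10 p m q e s ℓ hp hm hq he hs hℓ hF a z y lam ha hz0 hy0 hA hlam1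
        left
        linear_combination hE'
      · -- case 2 : r ≡ ℓ - q^s - q (mod ℓ)
        have hlt2 : q ^ s + q < ℓ := by
          by_contra hcon
          push_neg at hcon
          have p7 : (q - 1) * ℓ ≤ (q - 1) * (q ^ s + q) := Nat.mul_le_mul_left _ hcon
          have p2 : (q - 1) * (q ^ s + q) + (q ^ s + q) = q * (q ^ s + q) := by
            have h : q - 1 + 1 = q := by omega
            calc (q - 1) * (q ^ s + q) + (q ^ s + q) = ((q - 1) + 1) * (q ^ s + q) := by ring
              _ = q * (q ^ s + q) := by rw [h]
          have p3 : q * (q ^ s + q) = q ^ (s + 1) + q ^ 2 := by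
            rw [mul_add, ← pow_succ', ← pow_two]
          have p4 : q ^ (s + 1) ≤ q ^ e := Nat.pow_le_pow_right (by omega) (by omega)
          have p5 : q ^ 2 ≤ q ^ s := Nat.pow_le_pow_right (by omega) (by omega)
          rw [hgeom] at p7
          generalize hB : (q - 1) * (q ^ s + q) = B at p7 p2
          generalize hC : q * (q ^ s + q) = C at p2 p3
          generalize hD : q ^ (s + 1) = D at p3 p4
          generalize hE : q ^ 2 = E at p3 p5
          omega
        have hrm : (r - 1) % ℓ = ℓ - (q ^ s + q + 1) := by
          have hdm := Nat.div_add_mod r ℓ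
          have h1 : r - 1 = ℓ * (r / ℓ) + (ℓ - (q ^ s + q + 1)) := by omega
          rw [h1, Nat.mul_add_mod]
          exact Nat.mod_eq_of_lt (by omega)
        rw [hrm] at hpow0
        have hx1 : (x ^ (q - 1)) ^ (ℓ - (q ^ s + q + 1)) * (x ^ (q - 1)) ^ (q ^ s + q + 1) = 1 := by
          rw [← pow_add, Nat.sub_add_cancel (by omega), ← pow_mul]
          exact hQ1 x hx0
        have hy1 : (y ^ (q - 1)) ^ (ℓ - (q ^ s + q + 1)) * (y ^ (q - 1)) ^ (q ^ s + q + 1) = 1 := by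
          rw [← pow_add, Nat.sub_add_cancel (by omega), ← pow_mul]
          exact hQ1 y hy0
        have h5 : (y ^ (q - 1)) ^ (q ^ s + q + 1) * (x ^ q + a * x) ^ (q - 1)
            = (x ^ (q - 1)) ^ (q ^ s + q + 1) * (y ^ q + a * y) ^ (q - 1) := by
          calc (y ^ (q - 1)) ^ (q ^ s + q + 1) * (x ^ q + a * x) ^ (q - 1)
              = ((x ^ (q - 1)) ^ (ℓ - (q ^ s + q + 1)) * (x ^ (q - 1)) ^ (q ^ s + q + 1)) *
                ((y ^ (q - 1)) ^ (q ^ s + q + 1) * (x ^ q + a * x) ^ (q - 1)) := by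
                rw [hx1, one_mul]
            _ = ((x ^ (q - 1)) ^ (ℓ - (q ^ s + q + 1)) * (x ^ q + a * x) ^ (q - 1)) *
                ((x ^ (q - 1)) ^ (q ^ s + q + 1) * (y ^ (q - 1)) ^ (q ^ s + q + 1)) := by ring
            _ = ((y ^ (q - 1)) ^ (ℓ - (q ^ s + q + 1)) * (y ^ q + a * y) ^ (q - 1)) *
                ((x ^ (q - 1)) ^ (q ^ s + q + 1) * (y ^ (q - 1)) ^ (q ^ s + q + 1)) := by
                rw [hpow0]
            _ = ((y ^ (q - 1)) ^ (ℓ - (q ^ s + q + 1)) * (y ^ (q - 1)) ^ (q ^ s + q + 1)) *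
                ((x ^ (q - 1)) ^ (q ^ s + q + 1) * (y ^ q + a * y) ^ (q - 1)) := by ring
            _ = (x ^ (q - 1)) ^ (q ^ s + q + 1) * (y ^ q + a * y) ^ (q - 1) := by
                rw [hy1, one_mul]
        rw [pow_right_comm y, pow_right_comm x, ← mul_pow, ← mul_pow] at h5
        have hXne : y ^ (q ^ s + q + 1) * (x ^ q + a * x) ≠ 0 :=
          mul_ne_zero (pow_ne_zero _ hy0) hLx
        have hYne : x ^ (q ^ s + q + 1) * (y ^ q + a * y) ≠ 0 :=
          mul_ne_zero (pow_ne_zero _ hx0) hLy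
        set lam := (y ^ (q ^ s + q + 1) * (x ^ q + a * x)) *
          (x ^ (q ^ s + q + 1) * (y ^ q + a * y))⁻¹ with hlamdef
        have hlam0 : lam ≠ 0 := mul_ne_zero hXne (inv_ne_zero hYne)
        have hlam1 : lam ^ (q - 1) = 1 := by
          rw [hlamdef, mul_pow, inv_pow, h5, mul_inv_cancel₀ (pow_ne_zero _ hYne)]
        have hE : y ^ (q ^ s + q + 1) * (x ^ q + a * x)
            = lam * (x ^ (q ^ s + q + 1) * (y ^ q + a * y)) := by
          rw [hlamdef, inv_mul_cancel_right₀ hYne]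
        rw [hxz] at hE
        have hE' : (z * y) ^ q + a * (z * y)
            = lam * (z ^ (q ^ s + q + 1) * (y ^ q + a * y)) := by
          apply mul_left_cancel₀ (pow_ne_zero (q ^ s + q + 1) hy0)
          linear_combination hE
        have hzK : z ^ (q ^ s + q + 1) = z ^ q ^ s * z ^ q * z := by
          rw [pow_add, pow_add, pow_one]
        rw [hzK] at hE'
        have hE3 : lam⁻¹ * ((z * y) ^ q + a * (z * y))
            = z ^ q ^ s * z ^ q * z * (y ^ q + a * y) := by
          rw [hE', inv_mul_cancel_left₀ hlam0]
        have hlaminv1 : (lam⁻¹) ^ (q - 1) = 1 := by rw [inv_pow, hlam1, inv_one]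
        apply core_s10 p m q e s ℓ hp hm hq he hs hℓ hF a z (y * z) lam⁻¹ ha hz0
          (mul_ne_zero hy0 hz0) hA hlaminv1
        right
        linear_combination (-1 : F) * hE3
    -- common endgame
    have hz1 : z ^ (q - 1) = 1 := by
      have h1 : z ^ (q - 1) * z = 1 * z := by
        rw [one_mul, ← pow_succ, show q - 1 + 1 = q by omega]
        exact hzq
      exact mul_right_cancel₀ hz0 h1
    have hxy1 : x ^ (q - 1) = y ^ (q - 1) := by
      rw [hxz, mul_pow, hz1, one_mul]
    have hxr : x ^ r = y ^ r := by
      have h2 : x ^ q + a * x = x * (y ^ (q - 1) + a) := by rw [hxq, hxy1]; ring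
      have h3 : y ^ q + a * y = y * (y ^ (q - 1) + a) := by rw [hyq]; ring
      rw [h2, h3] at hxy
      have hxr1 : x ^ r = x ^ (r - 1) * x := by rw [← pow_succ]; congr 1; omega
      have hyr1 : y ^ r = y ^ (r - 1) * y := by rw [← pow_succ]; congr 1; omega
      have h4 : x ^ r * (y ^ (q - 1) + a) = y ^ r * (y ^ (q - 1) + a) := by
        rw [hxr1, hyr1]
        linear_combination hxy
      exact mul_right_cancel₀ (hqa y hy0) h4
    have ht1 : z ^ r = 1 := by
      rw [hzdef, mul_pow, inv_pow, hxr, mul_inv_cancel₀ (pow_ne_zero _ hy0)]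
    have ht2 : z ^ (q - 1) = 1 := hz1
    have hord : orderOf z = 1 := by
      have d1 := orderOf_dvd_of_pow_eq_one ht1
      have d2 := orderOf_dvd_of_pow_eq_one ht2
      have d3 := Nat.dvd_gcd d1 d2
      rw [hgcd] at d3
      exact Nat.dvd_one.mp d3
    have hz10 : z = 1 := orderOf_eq_one_iff.mp hord
    have : x = y := by
      rw [hxz, hz10, one_mul]
    exact this
  exact Finite.injective_iff_bijective.mp hinj
end

section
/- Let q ≥ 3 be a prime power, e ≥ 2 even, a ∈ F_{q^e} nonzero, r ≥ 1, f(x) = x^r(x^{q−1} + a), and ℓ = q^{e−1} + ⋯ + q + 1. If the least nonnegative residue of r modulo ℓ equals h·q + 1 for some nonnegative integer h with (q+1) ∤ h, then f does not permute F_{q^e}. -/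
open Finset

/-- Geometric sum identity in ℕ. -/
private lemma geom_aux (x : ℕ) (hx : 1 ≤ x) :
    ∀ t : ℕ, (x - 1) * (∑ i ∈ Finset.range t, x ^ i) + 1 = x ^ t := by
  intro t
  induction t with
  | zero => simp
  | succ t ih =>
    rw [Finset.sum_range_succ, Nat.mul_add]
    have h1 : (x - 1) * x ^ t + x ^ t = x * x ^ t := by
      have : x - 1 + 1 = x := by omega
      calc (x - 1) * x ^ t + x ^ t = ((x - 1) + 1) * x ^ t := by ring
        _ = x * x ^ t := by rw [this]
    calc (x - 1) * ∑ i ∈ Finset.range t, x ^ i + (x - 1) * x ^ t + 1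
        = ((x - 1) * ∑ i ∈ Finset.range t, x ^ i + 1) + (x - 1) * x ^ t := by ring
      _ = x ^ t + (x - 1) * x ^ t := by rw [ih]
      _ = x * x ^ t := by rw [add_comm, h1]
      _ = x ^ (t + 1) := (pow_succ' x t).symm

/-- Splitting an even geometric sum. -/
private lemma sum_even_aux (q : ℕ) :
    ∀ t : ℕ, ∑ i ∈ Finset.range (2 * t), q ^ i = (q + 1) * ∑ i ∈ Finset.range t, (q ^ 2) ^ i := by
  intro t
  induction t with
  | zero => simp
  | succ t ih =>
    have h2 : 2 * (t + 1) = 2 * t + 1 + 1 := by ring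
    rw [h2, Finset.sum_range_succ, Finset.sum_range_succ, ih, Finset.sum_range_succ]
    have e1 : q ^ (2 * t) = (q ^ 2) ^ t := by rw [← pow_mul]
    have e2 : q ^ (2 * t + 1) = q * (q ^ 2) ^ t := by rw [← pow_mul, pow_succ']
    rw [e1, e2]; ring

/-- Lucas' theorem, prime power modulus step: base `p^M` digit split mod `p`. -/
private lemma lucas_pow (p : ℕ) (hp : p.Prime) :
    ∀ (M n k : ℕ), (Nat.choose n k : ZMod p)
      = (Nat.choose (n % p ^ M) (k % p ^ M) : ZMod p)
        * (Nat.choose (n / p ^ M) (k / p ^ M) : ZMod p) := by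
  haveI : Fact p.Prime := ⟨hp⟩
  intro M
  induction M with
  | zero => intro n k; simp [Nat.mod_one]
  | succ M ih =>
    intro n k
    have hstep : ∀ a b : ℕ, (Nat.choose a b : ZMod p)
        = (Nat.choose (a % p) (b % p) : ZMod p) * (Nat.choose (a / p) (b / p) : ZMod p) := by
      intro a b
      have := Choose.choose_modEq_choose_mod_mul_choose_div_nat (n := a) (k := b) (p := p)
      have h2 := (ZMod.natCast_eq_natCast_iff _ _ _).mpr this
      rw [h2]; push_cast; ring
    have h1 := ih n k
    have h2 := hstep (n / p ^ M) (k / p ^ M)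
    have h3 := ih (n % p ^ (M + 1)) (k % p ^ (M + 1))
    have e1 : ∀ a : ℕ, a % p ^ (M + 1) % p ^ M = a % p ^ M := fun a =>
      Nat.mod_mod_of_dvd a (pow_dvd_pow p (Nat.le_succ M))
    have e2 : ∀ a : ℕ, a % p ^ (M + 1) / p ^ M = a / p ^ M % p := by
      intro a
      rw [pow_succ, Nat.mod_mul_right_div_self]
    have e3 : ∀ a : ℕ, a / p ^ (M + 1) = a / p ^ M / p := by
      intro a
      rw [pow_succ, Nat.div_div_eq_div_mul]
    rw [e1, e1, e2, e2] at h3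
    rw [e3, e3, h1, h2, h3]; ring

/-- `p ∤ C(p^m - 1, b)` for `b ≤ p^m - 1`. -/
private lemma choose_base (p : ℕ) (hp : p.Prime) :
    ∀ (m b : ℕ), b ≤ p ^ m - 1 → (Nat.choose (p ^ m - 1) b : ZMod p) ≠ 0 := by
  haveI : Fact p.Prime := ⟨hp⟩
  have hp1 : 1 ≤ p := hp.pos
  have hsmall : ∀ d : ℕ, d ≤ p - 1 → (Nat.choose (p - 1) d : ZMod p) ≠ 0 := by
    intro d hd hzero
    have hdvd : p ∣ Nat.choose (p - 1) d := (ZMod.natCast_eq_zero_iff _ _).mp hzero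
    have hfact := Nat.choose_mul_factorial_mul_factorial hd
    have : p ∣ Nat.factorial (p - 1) := by
      rw [← hfact]; exact Dvd.dvd.mul_right (Dvd.dvd.mul_right hdvd _) _
    have := (Nat.Prime.dvd_factorial hp).mp this
    omega
  intro m
  induction m with
  | zero =>
    intro b hb
    have hp0 : p ^ 0 = 1 := pow_zero p
    have hb0 : b = 0 := by omega
    subst hb0
    simp
  | succ m ih =>
    intro b hb
    have hpm : 1 ≤ p ^ m := Nat.one_le_pow _ _ hp.pos
    have hpm1 : 1 ≤ p ^ (m + 1) := Nat.one_le_pow _ _ hp.pos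
    -- p^(m+1) - 1 = p * (p^m - 1) + (p - 1)
    have hd : p ^ (m + 1) - 1 = p * (p ^ m - 1) + (p - 1) := by
      obtain ⟨c, hc⟩ : ∃ c, p ^ m = 1 + c := ⟨p ^ m - 1, by omega⟩
      rw [pow_succ, hc]
      have : (1 + c) - 1 = c := by omega
      rw [this]
      rw [add_mul, one_mul, mul_comm p c]
      generalize c * p = d
      omega
    have hmod : (p ^ (m + 1) - 1) % p = p - 1 := by
      rw [hd, add_comm, Nat.add_mul_mod_self_left, Nat.mod_eq_of_lt (by omega)]
    have hdiv : (p ^ (m + 1) - 1) / p = p ^ m - 1 := by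
      rw [hd, add_comm, Nat.add_mul_div_left _ _ hp.pos, Nat.div_eq_of_lt (by omega), zero_add]
    have hlucas := lucas_pow p hp 1 (p ^ (m + 1) - 1) b
    rw [pow_one, hmod, hdiv] at hlucas
    rw [hlucas]
    apply mul_ne_zero
    · apply hsmall
      have : b % p < p := Nat.mod_lt _ hp.pos
      omega
    · apply ih
      have : b < p ^ (m + 1) := by omega
      have : b / p < p ^ m := by
        rw [Nat.div_lt_iff_lt_mul hp.pos, ← pow_succ]
        omega
      omega

/-- The key binomial coefficient is nonzero mod `p`. -/
private lemma keyC (p m q : ℕ) (hp : p.Prime) (hq : q = p ^ m) (b : ℕ) (hb : b ≤ q - 1) :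
    ∀ t : ℕ,
      (Nat.choose ((q - 1) * ∑ i ∈ Finset.range t, (q ^ 2) ^ i)
        (b * ∑ i ∈ Finset.range t, (q ^ 2) ^ i) : ZMod p) ≠ 0 := by
  haveI : Fact p.Prime := ⟨hp⟩
  have hq1 : 1 ≤ q := by rw [hq]; exact Nat.one_le_pow _ _ hp.pos
  intro t
  induction t with
  | zero => simp
  | succ t ih =>
    set S := ∑ i ∈ Finset.range t, (q ^ 2) ^ i with hS
    have hQt : (q ^ 2) ^ t = p ^ (m * (2 * t)) := by
      rw [hq, ← pow_mul, ← pow_mul]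
    have hgeom := geom_aux (q ^ 2) (Nat.one_le_pow 2 q (by omega)) t
    rw [← hS] at hgeom
    -- (q-1) * S < (q^2)^t
    have hbound : (q - 1) * S < (q ^ 2) ^ t := by
      have hqq : q ≤ q ^ 2 := Nat.le_self_pow (by norm_num) q
      have h1 : (q - 1) * S ≤ (q ^ 2 - 1) * S := Nat.mul_le_mul_right _ (by omega)
      omega
    have hbS : b * S ≤ (q - 1) * S := Nat.mul_le_mul_right _ hb
    rw [Finset.sum_range_succ]
    have hn : (q - 1) * (S + (q ^ 2) ^ t) = (q - 1) * S + (q ^ 2) ^ t * (q - 1) := by ring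
    have hk : b * (S + (q ^ 2) ^ t) = b * S + (q ^ 2) ^ t * b := by ring
    have hlucas := lucas_pow p hp (m * (2 * t)) ((q - 1) * (S + (q ^ 2) ^ t))
      (b * (S + (q ^ 2) ^ t))
    rw [hn, hk, ← hQt] at hlucas
    rw [Nat.add_mul_mod_self_left, Nat.add_mul_mod_self_left,
      Nat.add_mul_div_left _ _ (by positivity), Nat.add_mul_div_left _ _ (by positivity),
      Nat.mod_eq_of_lt hbound, Nat.mod_eq_of_lt (lt_of_le_of_lt hbS hbound),
      Nat.div_eq_of_lt hbound, Nat.div_eq_of_lt (lt_of_le_of_lt hbS hbound),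
      zero_add, zero_add] at hlucas
    rw [hn, hk, hlucas]
    have hbase := choose_base p hp m b (by rw [← hq]; exact hb)
    rw [← hq] at hbase
    exact mul_ne_zero ih hbase

/-- Power sums over a finite field. -/
private lemma sum_pow_field {K : Type*} [Field K] [Fintype K] (i : ℕ) (hi : 0 < i) :
    ∑ x : K, x ^ i = if (Fintype.card K - 1) ∣ i then (-1 : K) else 0 := by
  classical
  let φ : Kˣ ↪ K := ⟨fun x ↦ x, Units.val_injective⟩
  have hmap : Finset.univ.map φ = Finset.univ \ {(0 : K)} := by
    ext x
    simpa only [Finset.mem_map, Finset.mem_univ, Function.Embedding.coeFn_mk, true_and,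
      Finset.mem_sdiff, Finset.mem_singleton, φ, IsUnit] using isUnit_iff_ne_zero
  calc ∑ x : K, x ^ i = ∑ x ∈ Finset.univ \ {(0 : K)}, x ^ i := by
        rw [← Finset.sum_sdiff (Finset.subset_univ ({0} : Finset K)), Finset.sum_singleton,
          zero_pow hi.ne', add_zero]
    _ = ∑ x : Kˣ, (x : K) ^ i := by rw [← hmap, Finset.sum_map]; rfl
    _ = if (Fintype.card K - 1) ∣ i then (-1 : K) else 0 := FiniteField.sum_pow_units K i

/-- For even `e` and `q ≥ 3`, if the least nonnegative residue of `r` modulo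
`ℓ = q^{e-1} + ⋯ + q + 1` equals `hq + 1` with `(q+1) ∤ h`, then
`f(x) = x^r (x^{q-1} + a)` does not permute `F_{q^e}`. -/
theorem stmt_12 (p m q e : ℕ) (hp : p.Prime) (hm : 0 < m) (hq : q = p ^ m)
    (hq3 : 3 ≤ q) (he : 2 ≤ e) (heven : Even e)
    {F : Type*} [Field F] [Fintype F] (hF : Fintype.card F = q ^ e)
    (a : F) (ha : a ≠ 0) (r : ℕ) (hr : 1 ≤ r)
    (ℓ : ℕ) (hℓ : ℓ = ∑ i ∈ Finset.range e, q ^ i)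
    (h : ℕ) (hres : r % ℓ = h * q + 1) (hnd : ¬ (q + 1) ∣ h) :
    ¬ Function.Bijective (fun x : F => x ^ r * (x ^ (q - 1) + a)) := by
  classical
  intro hbij
  obtain ⟨t, ht⟩ := heven
  have ht2 : e = 2 * t := by omega
  have ht1 : 1 ≤ t := by omega
  obtain ⟨N, hN⟩ : ∃ N, r % ℓ = N := ⟨_, rfl⟩
  have hresN : N = h * q + 1 := by rw [← hN, hres]
  obtain ⟨L, hLdef⟩ : ∃ L, (∑ i ∈ Finset.range t, (q ^ 2) ^ i) = L := ⟨_, rfl⟩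
  have hℓL : ℓ = (q + 1) * L := by rw [hℓ, ht2, sum_even_aux q t, hLdef]
  have hL1 : 1 ≤ L := by
    rw [← hLdef]
    have h0 : ((q:ℕ) ^ 2) ^ 0 ≤ ∑ i ∈ Finset.range t, ((q:ℕ) ^ 2) ^ i :=
      Finset.single_le_sum (f := fun i => ((q:ℕ) ^ 2) ^ i) (fun i _ => Nat.zero_le _)
        (Finset.mem_range.mpr ht1)
    simpa using h0
  have hℓ4 : 4 ≤ ℓ := by
    have hh : (q + 1) * 1 ≤ (q + 1) * L := Nat.mul_le_mul_left _ hL1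
    omega
  have hnℓ : (q - 1) * ℓ + 1 = q ^ e := by rw [hℓ]; exact geom_aux q (by omega) e
  have hcard : Fintype.card F - 1 = (q - 1) * ℓ := by rw [hF, ← hnℓ, Nat.add_sub_cancel]
  -- N mod (q+1) ≠ 1
  have hNmod1 : N % (q + 1) ≠ 1 := by
    intro hmod
    apply hnd
    have h1 : (q + 1) ∣ h * q := by
      have hN1 : 1 ≤ N := by rw [hresN]; exact Nat.le_add_left 1 (h * q)
      have hme : N ≡ 1 [MOD q + 1] := by
        unfold Nat.ModEq
        rw [hmod, Nat.mod_eq_of_lt (by omega)]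
      have hdvd := (Nat.modEq_iff_dvd' hN1).mp hme.symm
      have hsub : N - 1 = h * q := by rw [hresN]; simp
      rwa [hsub] at hdvd
    have hcop : Nat.Coprime (q + 1) q := Nat.coprime_self_add_left.mpr (Nat.coprime_one_left q)
    exact hcop.dvd_of_dvd_mul_right h1
  obtain ⟨b, hbdef⟩ : ∃ b, (q + 1 - N % (q + 1)) % (q + 1) = b := ⟨_, rfl⟩
  have hρlt : N % (q + 1) < q + 1 := Nat.mod_lt _ (by omega)
  have hble : b ≤ q - 1 := by
    rcases Nat.eq_zero_or_pos (N % (q + 1)) with h0 | hpos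
    · rw [← hbdef, h0, Nat.sub_zero, Nat.mod_self]; omega
    · have h2 : 2 ≤ N % (q + 1) := by omega
      rw [← hbdef, Nat.mod_eq_of_lt (by omega)]; omega
  have hdvdNb : (q + 1) ∣ N + b := by
    rcases Nat.eq_zero_or_pos (N % (q + 1)) with h0 | hpos
    · have hb0 : b = 0 := by rw [← hbdef, h0, Nat.sub_zero, Nat.mod_self]
      rw [hb0, add_zero]
      exact Nat.dvd_of_mod_eq_zero h0
    · have hblt : b = q + 1 - N % (q + 1) := by
        rw [← hbdef]; exact Nat.mod_eq_of_lt (by omega)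
      have hsubdvd : (q + 1) ∣ N - N % (q + 1) := Nat.dvd_sub_mod N
      have hmle : N % (q + 1) ≤ N := Nat.mod_le _ _
      have h2 : N + b = (N - N % (q + 1)) + (q + 1) := by
        rw [hblt]
        generalize N % (q + 1) = B at *
        omega
      rw [h2]
      exact Nat.dvd_add hsubdvd dvd_rfl
  obtain ⟨k, hkdef⟩ : ∃ k, (q - 1) * L = k := ⟨_, rfl⟩
  obtain ⟨j0, hj0def⟩ : ∃ j0, b * L = j0 := ⟨_, rfl⟩
  have hj0dvd : ℓ ∣ N * L + j0 := by
    rw [← hj0def, hℓL, ← Nat.add_mul]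
    exact Nat.mul_dvd_mul_right hdvdNb L
  have hj0k : j0 ≤ k := by rw [← hj0def, ← hkdef]; exact Nat.mul_le_mul_right _ hble
  have hkℓ : k < ℓ := by
    rw [← hkdef, hℓL]
    exact Nat.mul_lt_mul_of_lt_of_le (by omega) (le_refl L) hL1
  have hk1 : 0 < k := by
    rw [← hkdef]
    exact Nat.mul_pos (by omega) hL1
  -- divisibility characterization
  have hdvd_iff : ∀ j : ℕ, ((q - 1) * ℓ ∣ r * k + j * (q - 1)) ↔ ℓ ∣ N * L + j := by
    intro j
    have h1 : r * k + j * (q - 1) = (r * L + j) * (q - 1) := by rw [← hkdef]; ring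
    have h2 : (q - 1) * ℓ = ℓ * (q - 1) := by ring
    rw [h1, h2, Nat.mul_dvd_mul_iff_right (show 0 < q - 1 by omega)]
    have hr2 : r = ℓ * (r / ℓ) + N := by rw [← hN]; exact (Nat.div_add_mod r ℓ).symm
    have h3 : r * L + j = ℓ * (r / ℓ * L) + (N * L + j) := by
      conv_lhs => rw [hr2]
      ring
    rw [h3]
    constructor
    · intro hd
      exact (Nat.dvd_add_right ⟨r / ℓ * L, by ring⟩).mp hd
    · intro hd
      exact Nat.dvd_add ⟨r / ℓ * L, by ring⟩ hd
  have huniq : ∀ j : ℕ, j ≤ k → ℓ ∣ N * L + j → j = j0 := by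
    intro j hjk hdvd
    have hme : N * L + j ≡ N * L + j0 [MOD ℓ] :=
      (Nat.modEq_zero_iff_dvd.mpr hdvd).trans (Nat.modEq_zero_iff_dvd.mpr hj0dvd).symm
    have hcan := Nat.ModEq.add_left_cancel' (N * L) hme
    have hjlt : j < ℓ := lt_of_le_of_lt hjk hkℓ
    have hj0lt : j0 < ℓ := lt_of_le_of_lt hj0k hkℓ
    unfold Nat.ModEq at hcan
    rwa [Nat.mod_eq_of_lt hjlt, Nat.mod_eq_of_lt hj0lt] at hcan
  -- characteristic of F is p
  haveI hpfact : Fact p.Prime := ⟨hp⟩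
  have hcharp : CharP F p := by
    have hc0 : ((Fintype.card F : ℕ) : F) = 0 := FiniteField.cast_card_eq_zero F
    rw [hF, hq, ← pow_mul] at hc0
    push_cast at hc0
    have hp0 : (p : F) = 0 := by
      have hme : m * e ≠ 0 := by positivity
      exact pow_eq_zero_iff hme |>.mp hc0
    have hchar := ringChar.charP F
    have hdvd : ringChar F ∣ p := (CharP.cast_eq_zero_iff F (ringChar F) p).mp hp0
    have hne1 : ringChar F ≠ 1 := CharP.ringChar_ne_one
    have heq : ringChar F = p := ((Nat.dvd_prime hp).mp hdvd).resolve_left hne1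
    rwa [heq] at hchar
  haveI := hcharp
  -- positivity of exponents
  have hEpos : ∀ j : ℕ, 0 < r * k + j * (q - 1) := fun j =>
    lt_of_lt_of_le (Nat.mul_pos hr hk1) (Nat.le_add_right _ _)
  -- the sums
  have hbijsum : ∑ x : F, (x ^ r * (x ^ (q - 1) + a)) ^ k = ∑ y : F, y ^ k :=
    Fintype.sum_bijective _ hbij _ _ (fun x => rfl)
  have hRHS : ∑ y : F, y ^ k = 0 := by
    rw [sum_pow_field k hk1, if_neg]
    rw [hcard]
    intro hdvd
    have h5 := Nat.le_of_dvd hk1 hdvd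
    have hle : ℓ ≤ (q - 1) * ℓ := Nat.le_mul_of_pos_left _ (by omega)
    omega
  have expand : ∀ x : F, (x ^ r * (x ^ (q - 1) + a)) ^ k
      = ∑ j ∈ Finset.range (k + 1),
          (Nat.choose k j : F) * (a ^ (k - j) * x ^ (r * k + j * (q - 1))) := by
    intro x
    rw [mul_pow, add_pow, Finset.mul_sum]
    refine Finset.sum_congr rfl fun j hj => ?_
    have e1 : x ^ (r * k + j * (q - 1)) = (x ^ r) ^ k * (x ^ (q - 1)) ^ j := by
      rw [pow_add, ← pow_mul, ← pow_mul, mul_comm j (q - 1)]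
    rw [e1]; ring
  have hj0mem : j0 ∈ Finset.range (k + 1) := Finset.mem_range.mpr (by omega)
  have hLHS : ∑ x : F, (x ^ r * (x ^ (q - 1) + a)) ^ k
      = -((Nat.choose k j0 : F) * a ^ (k - j0)) := by
    calc ∑ x : F, (x ^ r * (x ^ (q - 1) + a)) ^ k
        = ∑ x : F, ∑ j ∈ Finset.range (k + 1),
            (Nat.choose k j : F) * (a ^ (k - j) * x ^ (r * k + j * (q - 1))) :=
          Finset.sum_congr rfl fun x _ => expand x
      _ = ∑ j ∈ Finset.range (k + 1), ∑ x : F,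
            (Nat.choose k j : F) * (a ^ (k - j) * x ^ (r * k + j * (q - 1))) :=
          Finset.sum_comm
      _ = ∑ j ∈ Finset.range (k + 1),
            (Nat.choose k j : F) * (a ^ (k - j) * ∑ x : F, x ^ (r * k + j * (q - 1))) := by
          refine Finset.sum_congr rfl fun j _ => ?_
          rw [← Finset.mul_sum, ← Finset.mul_sum]
      _ = (Nat.choose k j0 : F) * (a ^ (k - j0) * ∑ x : F, x ^ (r * k + j0 * (q - 1))) := by
          refine Finset.sum_eq_single_of_mem j0 hj0mem ?_
          intro j hjmem hjne
          have hjk : j ≤ k := by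
            have := Finset.mem_range.mp hjmem
            omega
          rw [sum_pow_field _ (hEpos j), if_neg]
          · rw [mul_zero, mul_zero]
          · rw [hcard, hdvd_iff]
            intro hd
            exact hjne (huniq j hjk hd)
      _ = -((Nat.choose k j0 : F) * a ^ (k - j0)) := by
          rw [sum_pow_field _ (hEpos j0), if_pos]
          · ring
          · rw [hcard, hdvd_iff]; exact hj0dvd
  -- contradiction
  have hzero : (Nat.choose k j0 : F) * a ^ (k - j0) = 0 := by
    have h6 := hbijsum.symm.trans hLHS
    rw [hRHS] at h6
    have h7 := h6.symm
    rwa [neg_eq_zero] at h7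
  have hCzero : (Nat.choose k j0 : F) = 0 := by
    rcases mul_eq_zero.mp hzero with h1 | h1
    · exact h1
    · exact absurd h1 (pow_ne_zero _ ha)
  have hpdvd : p ∣ Nat.choose k j0 := (CharP.cast_eq_zero_iff F p _).mp hCzero
  have hCz2 : (Nat.choose k j0 : ZMod p) = 0 := (ZMod.natCast_eq_zero_iff _ _).mpr hpdvd
  have hkey := keyC p m q hp hq b hble t
  rw [hLdef, hkdef, hj0def] at hkey
  exact hkey hCz2
end

section
/- Let q ≥ 3 be a prime power and e ≥ 3, let ℓ = q^{e−1} + ⋯ + q + 1, and suppose r = h(ℓ − q^{e−1} − 1) + 1 for some integer h with 1 ≤ h ≤ q − 1. Let N = 2q^{e−1} − q^{e−2} − 1 (note (q−1) | N), let j = 2h·q^{e−3} + h·Σ_{i=0}^{e−4} q^i, and for an integer i set A_i = i·ℓ − rN/(q−1). Then S_N = {A_{j+1}} if h = 1; S_N = {A_j, A_{j+1}} if 2 ≤ h ≤ q − 2; and S_N = {A_j} if h = q − 1. Moreover A_j = (h−2)q^{e−2} + (2h−1)q^{e−3} + (h−1)·Σ_{i=0}^{e−4} q^i and A_{j+1}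 = q^{e−1} + (h−1)q^{e−2} + 2h·q^{e−3} + h·Σ_{i=0}^{e−4} q^i. -/
set_option maxHeartbeats 1000000


/-- Description of the set `S_N` for `N = 2q^{e-1} - q^{e-2} - 1` and
`r = h(ℓ - q^{e-1} - 1) + 1` with `1 ≤ h ≤ q - 1`, together with the values of
`A_j` and `A_{j+1}`, where `A_i = iℓ - rN/(q-1)` and
`j = 2h q^{e-3} + h Σ_{i=0}^{e-4} q^i`. -/
theorem stmt_14 (p n q e h : ℕ) (hp : p.Prime) (hn : 0 < n) (hq : q = p ^ n)
    (hq3 : 3 ≤ q) (he : 3 ≤ e) (hh1 : 1 ≤ h) (hh2 : h ≤ q - 1)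
    (ℓ r N : ℤ) (hℓ : ℓ = ∑ i ∈ Finset.range e, (q : ℤ) ^ i)
    (hr : r = h * (ℓ - (q : ℤ) ^ (e - 1) - 1) + 1)
    (hN : N = 2 * (q : ℤ) ^ (e - 1) - (q : ℤ) ^ (e - 2) - 1)
    (j : ℤ) (hj : j = 2 * h * (q : ℤ) ^ (e - 3) + h * ∑ i ∈ Finset.range (e - 3), (q : ℤ) ^ i)
    (A : ℤ → ℤ) (hA : ∀ i : ℤ, A i = i * ℓ - r * N / ((q : ℤ) - 1))
    (S : Set ℤ) (hS : S = {x : ℤ | 0 ≤ x ∧ x ≤ N ∧ ∃ i : ℤ, x = A i}) :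
    ((q : ℤ) - 1) ∣ N ∧
    A j = (h - 2) * (q : ℤ) ^ (e - 2) + (2 * h - 1) * (q : ℤ) ^ (e - 3) +
        (h - 1) * ∑ i ∈ Finset.range (e - 3), (q : ℤ) ^ i ∧
    A (j + 1) = (q : ℤ) ^ (e - 1) + (h - 1) * (q : ℤ) ^ (e - 2) +
        2 * h * (q : ℤ) ^ (e - 3) + h * ∑ i ∈ Finset.range (e - 3), (q : ℤ) ^ i ∧
    S = if h = 1 then {A (j + 1)} else if h = q - 1 then {A j} else {A j, A (j + 1)} := by
  clear hp hn hq
  obtain ⟨m, rfl⟩ : ∃ m, e = m + 3 := ⟨e - 3, by omega⟩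
  clear he
  have hq3' : (3:ℤ) ≤ (q:ℤ) := by exact_mod_cast hq3
  have hh1' : (1:ℤ) ≤ (h:ℤ) := by exact_mod_cast hh1
  have hh2' : (h:ℤ) ≤ (q:ℤ) - 1 := by
    have : h + 1 ≤ q := by omega
    have := Int.ofNat_le.mpr this
    push_cast at this; linarith
  simp only [show m+3-1 = m+2 from rfl, show m+3-2 = m+1 from rfl,
    show m+3-3 = m from rfl] at hr hN hj ⊢
  rw [Finset.sum_range_succ, Finset.sum_range_succ, Finset.sum_range_succ] at hℓ
  have hgs : ((q:ℤ) - 1) * ∑ i ∈ Finset.range m, (q:ℤ)^i = (q:ℤ)^m - 1 := by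
    rw [mul_comm]; exact geom_sum_mul _ _
  have hsnn : 0 ≤ ∑ i ∈ Finset.range m, (q:ℤ)^i :=
    Finset.sum_nonneg fun i _ => by positivity
  obtain ⟨s, hs⟩ : ∃ s:ℤ, ∑ i ∈ Finset.range m, (q:ℤ)^i = s := ⟨_, rfl⟩
  rw [hs] at hℓ hj hgs hsnn ⊢
  rw [show (q:ℤ)^(m+2) = (q:ℤ)^m*q*q from by ring] at hr hN hℓ ⊢
  rw [show (q:ℤ)^(m+1) = (q:ℤ)^m*q from by ring] at hN hℓ ⊢
  have hQ1 : (1:ℤ) ≤ (q:ℤ)^m := one_le_pow₀ (by linarith)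
  obtain ⟨Q, hQ⟩ : ∃ Q:ℤ, (q:ℤ)^m = Q := ⟨_, rfl⟩
  rw [hQ] at hr hN hℓ hj hgs hQ1 ⊢
  have hq0' : (0:ℤ) < (q:ℤ) := by linarith
  have hQ0 : (0:ℤ) < Q := by linarith
  have hq0 : ((q:ℤ) - 1) ≠ 0 := by intro hc; linarith [hc]
  have hNM : N = ((q:ℤ)-1) * (s + Q + 2*(Q*q)) := by
    rw [hN]; linear_combination -hgs
  have hdvd : ((q:ℤ)-1) ∣ N := ⟨_, hNM⟩
  have hAM : ∀ i : ℤ, A i = i*ℓ - r*(s + Q + 2*(Q*q)) := by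
    intro i
    rw [hA i, hNM, show r * (((q:ℤ)-1)*(s + Q + 2*(Q*q)))
        = ((q:ℤ)-1) * (r*(s + Q + 2*(Q*q))) from by ring,
      Int.mul_ediv_cancel_left _ hq0]
  have hAj : A j = ((h:ℤ)-1)*s + (2*(h:ℤ)-1)*Q + ((h:ℤ)-2)*(Q*q) := by
    rw [hAM, hj, hr, hℓ]
    linear_combination ((h:ℤ)*Q*((q:ℤ)-1)) * hgs
  have hQq : (0:ℤ) < Q*q := mul_pos hQ0 hq0'
  have hQqq : (0:ℤ) < Q*q*q := mul_pos hQq hq0'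
  have hℓpos : 0 < ℓ := by rw [hℓ]; linarith
  have hAj1 : A (j+1) = (h:ℤ)*s + 2*(h:ℤ)*Q + ((h:ℤ)-1)*(Q*q) + Q*q*q := by
    have hstep : A (j+1) = A j + ℓ := by rw [hAM, hAM]; ring
    rw [hstep, hAj, hℓ]; ring
  -- global inequalities
  have hX1 : (0:ℤ) ≤ ((q:ℤ)-1-h)*s := mul_nonneg (by linarith) hsnn
  have hX2 : (0:ℤ) ≤ ((q:ℤ)-1-h)*Q := mul_nonneg (by linarith) hQ0.le
  have hX3 : (0:ℤ) ≤ ((q:ℤ)-1-h)*(Q*q) := mul_nonneg (by linarith) hQq.le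
  have hY1 : (0:ℤ) ≤ (h:ℤ)*s := mul_nonneg (by linarith) hsnn
  have hY2 : (0:ℤ) ≤ (h:ℤ)*Q := mul_nonneg (by linarith) hQ0.le
  have hY3 : (0:ℤ) ≤ (h:ℤ)*(Q*q) := mul_nonneg (by linarith) hQq.le
  have hZ : (0:ℤ) ≤ ((h:ℤ)-1)*(Q*q) := mul_nonneg (by linarith) hQq.le
  have hC : A j ≤ N := by
    rw [hAj, hN]; nlinarith [hX1, hX2, hX3, hgs, hsnn, hQ0, hQqq]
  have hD : 0 ≤ A (j+1) := by
    rw [hAj1]; nlinarith [hY1, hY2, hZ, hQqq]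
  have hG : A j < ℓ := by
    rw [hAj, hℓ]; nlinarith [hX1, hX2, hX3, hgs, hsnn, hQ0, hQq]
  have hH : N - ℓ < A (j+1) := by
    rw [hAj1, hN, hℓ]; nlinarith [hY1, hY2, hY3, hsnn, hQ0, hQq]
  have hB : 2 ≤ (h:ℤ) → 0 ≤ A j := by
    intro hh
    have hZ2 : (0:ℤ) ≤ ((h:ℤ)-2)*(Q*q) := mul_nonneg (by linarith) hQq.le
    have hZ1 : (0:ℤ) ≤ ((h:ℤ)-1)*s := mul_nonneg (by linarith) hsnn
    rw [hAj]; nlinarith [hZ1, hZ2, hQ0]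
  have hE : (h:ℤ) ≤ (q:ℤ) - 2 → A (j+1) ≤ N := by
    intro hh
    have hW1 : (0:ℤ) ≤ ((q:ℤ)-2-h)*s := mul_nonneg (by linarith) hsnn
    have hW2 : (0:ℤ) ≤ ((q:ℤ)-2-h)*Q := mul_nonneg (by linarith) hQ0.le
    have hW3 : (0:ℤ) ≤ ((q:ℤ)-2-h)*(Q*q) := mul_nonneg (by linarith) hQq.le
    rw [hAj1, hN]; nlinarith [hW1, hW2, hW3, hgs, hsnn, hQ0]
  -- monotonicity helpers
  have hdiff : ∀ i k : ℤ, A k - A i = (k - i) * ℓ := by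
    intro i k; rw [hAM, hAM]; ring
  have hmono : ∀ i k : ℤ, i ≤ k → A i ≤ A k := by
    intro i k hik
    have h1 := hdiff i k
    have h2 : 0 ≤ (k - i) * ℓ := mul_nonneg (by linarith) hℓpos.le
    linarith
  have hlow : ∀ i : ℤ, i ≤ j - 1 → A i ≤ A j - ℓ := by
    intro i hi
    have h1 := hdiff i j
    have h2 : ℓ ≤ (j - i) * ℓ := le_mul_of_one_le_left hℓpos.le (by linarith)
    linarith
  have hhigh : ∀ i : ℤ, j + 2 ≤ i → A (j+1) + ℓ ≤ A i := by
    intro i hi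
    have h1 := hdiff (j+1) i
    have h2 : ℓ ≤ (i - (j+1)) * ℓ := le_mul_of_one_le_left hℓpos.le (by linarith)
    linarith
  refine ⟨hdvd, by rw [hAj]; ring, by rw [hAj1]; ring, ?_⟩
  rw [hS]
  split_ifs with hc1 hc2
  · -- h = 1
    have hcast : (h:ℤ) = 1 := by rw [hc1]; norm_num
    have hAjneg : A j < 0 := by
      have : (0:ℤ) ≤ ((q:ℤ)-3)*Q := mul_nonneg (by linarith) hQ0.le
      rw [hAj, hcast]; nlinarith [hQ0, this]
    have hle : A (j+1) ≤ N := hE (by linarith)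
    ext x
    simp only [Set.mem_setOf_eq, Set.mem_singleton_iff]
    constructor
    · rintro ⟨hx0, hxN, i, rfl⟩
      have hi : i = j + 1 := by
        by_contra hne
        rcases (by omega : i ≤ j ∨ j + 2 ≤ i) with hcase | hcase
        · have := hmono i j hcase; linarith
        · have := hhigh i hcase; linarith
      rw [hi]
    · rintro rfl; exact ⟨hD, hle, j+1, rfl⟩
  · -- h = q - 1
    have hcast : (h:ℤ) = (q:ℤ) - 1 := by
      have : h + 1 = q := by omega
      have := congrArg (Nat.cast : ℕ → ℤ) this
      push_cast at this; linarith
    have hF : N < A (j+1) := by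
      have : (0:ℤ) ≤ ((q:ℤ)-3)*Q := mul_nonneg (by linarith) hQ0.le
      rw [hAj1, hN, hcast]
      nlinarith [hgs, hQ0, this]
    have hBj : 0 ≤ A j := hB (by omega)
    ext x
    simp only [Set.mem_setOf_eq, Set.mem_singleton_iff]
    constructor
    · rintro ⟨hx0, hxN, i, rfl⟩
      have hi : i = j := by
        by_contra hne
        rcases (by omega : i ≤ j - 1 ∨ j + 1 ≤ i) with hcase | hcase
        · have := hlow i hcase; linarith
        · have := hmono (j+1) i hcase; linarith
      rw [hi]
    · rintro rfl; exact ⟨hBj, hC, j, rfl⟩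
  · -- 2 ≤ h ≤ q - 2
    have hcast2 : 2 ≤ (h:ℤ) := by
      have : 2 ≤ h := by omega
      exact_mod_cast this
    have hcastq : (h:ℤ) ≤ (q:ℤ) - 2 := by
      have : h + 2 ≤ q := by omega
      have := Int.ofNat_le.mpr this
      push_cast at this; linarith
    have hBj : 0 ≤ A j := hB hcast2
    have hle : A (j+1) ≤ N := hE hcastq
    ext x
    simp only [Set.mem_setOf_eq, Set.mem_insert_iff, Set.mem_singleton_iff]
    constructor
    · rintro ⟨hx0, hxN, i, rfl⟩
      have hi : i = j ∨ i = j + 1 := by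
        by_contra hne
        rcases (by omega : i ≤ j - 1 ∨ j + 2 ≤ i) with hcase | hcase
        · have := hlow i hcase; linarith
        · have := hhigh i hcase; linarith
      rcases hi with rfl | rfl
      · left; rfl
      · right; rfl
    · rintro (rfl | rfl)
      · exact ⟨hBj, hC, j, rfl⟩
      · exact ⟨hD, hle, j+1, rfl⟩
end

section
/- Let q be a prime power, e ≥ 2, r ≥ 1, and let ξ be a primitive element (a generator of the multiplicative group) of F_{q^e}. For an integer m, let f_m(x) = x^r(x^{q−1} + ξ^m). If f_j does not permute F_{q^e} for every j with 0 ≤ j < q − 1, then f_m does not permute F_{q^e} for every m with 0 ≤ m < q^e − 1. -/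
/-- Let `ξ` be a primitive element of `F_{q^e}` and `f_m(x) = x^r (x^{q-1} + ξ^m)`.
If `f_j` does not permute `F_{q^e}` for all `0 ≤ j < q - 1`, then `f_m` does not
permute `F_{q^e}` for all `0 ≤ m < q^e - 1`. -/
theorem stmt_19 (p mexp q e : ℕ) (hp : p.Prime) (hmexp : 0 < mexp) (hq : q = p ^ mexp)
    (he : 2 ≤ e) {F : Type*} [Field F] [Fintype F] (hF : Fintype.card F = q ^ e)
    (r : ℕ) (hr : 1 ≤ r) (ξ : F) (hξ : orderOf ξ = q ^ e - 1)
    (hyp : ∀ j : ℕ, j < q - 1 →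
      ¬ Function.Bijective (fun x : F => x ^ r * (x ^ (q - 1) + ξ ^ j))) :
    ∀ m : ℕ, m < q ^ e - 1 →
      ¬ Function.Bijective (fun x : F => x ^ r * (x ^ (q - 1) + ξ ^ m)) := by
  intro m hm hbij
  have hq2 : 2 ≤ q := by
    rw [hq]
    calc 2 ≤ p := hp.two_le
    _ ≤ p ^ mexp := Nat.le_self_pow hmexp.ne' p
  have hq1 : 0 < q - 1 := by omega
  have hqe : 4 ≤ q ^ e := by
    calc 4 = 2 ^ 2 := rfl
    _ ≤ q ^ e := Nat.pow_le_pow_left hq2 2 |>.trans (Nat.pow_le_pow_right (by omega) he)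
  have hξ0 : ξ ≠ 0 := by
    intro h
    have h1 : ξ ^ (q ^ e - 1) = 1 := hξ ▸ pow_orderOf_eq_one ξ
    rw [h, zero_pow (by omega : q ^ e - 1 ≠ 0)] at h1
    exact zero_ne_one h1
  set j := m % (q - 1) with hj
  set k := m / (q - 1) with hk
  have hmeq : m = (q - 1) * k + j := (Nat.div_add_mod m (q - 1)).symm
  have hjlt : j < q - 1 := Nat.mod_lt m hq1
  apply hyp j hjlt
  have hc : (ξ ^ (k * r) * ξ ^ (k * (q - 1))) ≠ 0 := by
    apply mul_ne_zero <;> exact pow_ne_zero _ hξ0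
  have hcomp : (fun x : F => x ^ r * (x ^ (q - 1) + ξ ^ j)) =
      (fun y : F => (ξ ^ (k * r) * ξ ^ (k * (q - 1)))⁻¹ * y) ∘
      (fun x : F => x ^ r * (x ^ (q - 1) + ξ ^ m)) ∘ (fun x : F => ξ ^ k * x) := by
    funext x
    simp only [Function.comp]
    rw [hmeq, pow_add, mul_pow, mul_pow, ← pow_mul, ← pow_mul, mul_comm (q-1) k]
    field_simp
  rw [hcomp]
  exact ((mul_right_injective₀ (inv_ne_zero hc)).comp (hbij.injective.comp
    (mul_right_injective₀ (pow_ne_zero k hξ0)))).bijective_of_finite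
end
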